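/- arXiv:2107.01950 — 7 statements merged into one kernel-verified Lean document; each statement's English description precedes it below -/
import Mathlib

section
/- Let B be a commutative ring and let F be a functor from commutative B-algebras to sets. Then the map F(B)/R → F(B[u])/R induced by the inclusion of B into the polynomial ring B[u] in one indeterminate u is bijective. -/
noncomputable section

open Polynomial

/-- The multiplicative subset `Σ` of `B[t]` consisting of the polynomials whose values
at `t = 0` and `t = 1` are units of `B`. -/
def RSigma (B : Type*) [CommRing B] : Submonoid (Polynomial B) where
  carrier := {P | IsUnit (P.eval 0) ∧ IsUnit (P.eval 1)}
  mul_mem' := fun ha hb =>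
    ⟨by rw [eval_mul]; exact ha.1.mul hb.1, by rw [eval_mul]; exact ha.2.mul hb.2⟩
  one_mem' := ⟨by simp, by simp⟩

theorem mem_RSigma {B : Type*} [CommRing B] {P : Polynomial B} :
    P ∈ RSigma B ↔ IsUnit (P.eval 0) ∧ IsUnit (P.eval 1) := Iff.rfl

/-- The localization `B[t]_Σ` of `B[t]` at `Σ`. -/
abbrev RLoc (B : Type*) [CommRing B] := Localization (RSigma B)

/-- Evaluation at `t = 0`, extended to `B[t]_Σ`, as a `B`-algebra homomorphism. -/
def ev0 (B : Type*) [CommRing B] : RLoc B →ₐ[B] B :=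
  IsLocalization.liftAlgHom (M := RSigma B) (f := Polynomial.aeval (0 : B))
    (fun y => by simpa using (mem_RSigma.mp y.2).1)

/-- Evaluation at `t = 1`, extended to `B[t]_Σ`, as a `B`-algebra homomorphism. -/
def ev1 (B : Type*) [CommRing B] : RLoc B →ₐ[B] B :=
  IsLocalization.liftAlgHom (M := RSigma B) (f := Polynomial.aeval (1 : B))
    (fun y => by simpa using (mem_RSigma.mp y.2).2)


universe u

variable (B : Type u) [CommRing B]

/-- A functor from the category of commutative `B`-algebras (in the universe `u`)
to the category of sets. -/
structure SetValuedFunctor (B : Type u) [CommRing B] where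
  obj : (C : Type u) → [CommRing C] → [Algebra B C] → Type u
  map : {C D : Type u} → [CommRing C] → [Algebra B C] → [CommRing D] → [Algebra B D] →
    (C →ₐ[B] D) → obj C → obj D
  map_id : ∀ (C : Type u) [CommRing C] [Algebra B C], map (AlgHom.id B C) = id
  map_comp : ∀ {C D E : Type u} [CommRing C] [Algebra B C] [CommRing D] [Algebra B D]
    [CommRing E] [Algebra B E] (f : C →ₐ[B] D) (g : D →ₐ[B] E),
    map (g.comp f) = map g ∘ map f

/-- Evaluation at `t = 0` on `C[t]_{Σ_C}`, as a homomorphism of `B`-algebras. -/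
def ev0R (C : Type u) [CommRing C] [Algebra B C] : RLoc C →ₐ[B] C :=
  IsLocalization.liftAlgHom (M := RSigma C)
    (f := (Polynomial.aeval (0 : C)).restrictScalars B)
    (fun y => by simpa using (mem_RSigma.mp y.2).1)

/-- Evaluation at `t = 1` on `C[t]_{Σ_C}`, as a homomorphism of `B`-algebras. -/
def ev1R (C : Type u) [CommRing C] [Algebra B C] : RLoc C →ₐ[B] C :=
  IsLocalization.liftAlgHom (M := RSigma C)
    (f := (Polynomial.aeval (1 : C)).restrictScalars B)
    (fun y => by simpa using (mem_RSigma.mp y.2).2)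

/-- Two points `x₀ x₁ ∈ F(C)` are directly R-equivalent if they are the two
evaluations of a point of `F(C[t]_Σ)`. -/
def DirectR (F : SetValuedFunctor B) (C : Type u) [CommRing C] [Algebra B C]
    (x₀ x₁ : F.obj C) : Prop :=
  ∃ x : F.obj (RLoc C), F.map (ev0R B C) x = x₀ ∧ F.map (ev1R B C) x = x₁

/-- R-equivalence: the equivalence relation generated by direct R-equivalence. -/
def REquiv (F : SetValuedFunctor B) (C : Type u) [CommRing C] [Algebra B C]
    (x₀ x₁ : F.obj C) : Prop :=
  Relation.EqvGen (DirectR B F C) x₀ x₁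


section Aux

variable {B : Type u} [CommRing B] {C D : Type u} [CommRing C] [Algebra B C]
  [CommRing D] [Algebra B D]

lemma map_mem_RSigma (f : C →ₐ[B] D) {P : Polynomial C} (hP : P ∈ RSigma C) :
    P.map (f : C →+* D) ∈ RSigma D := by
  refine ⟨?_, ?_⟩
  · rw [Polynomial.eval_zero_map]; exact hP.1.map f
  · rw [Polynomial.eval_one_map]; exact hP.2.map f

/-- Functoriality of `RLoc`. -/
def mapRLoc (f : C →ₐ[B] D) : RLoc C →ₐ[B] RLoc D :=
  IsLocalization.liftAlgHom (M := RSigma C)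
    (f := (IsScalarTower.toAlgHom B (Polynomial D) (RLoc D)).comp (Polynomial.mapAlgHom f))
    (fun y => IsLocalization.map_units (M := RSigma D) _
      ⟨y.1.map (f : C →+* D), map_mem_RSigma f y.2⟩)

lemma mapRLoc_algebraMap (f : C →ₐ[B] D) (p : Polynomial C) :
    mapRLoc f (algebraMap (Polynomial C) (RLoc C) p)
      = algebraMap (Polynomial D) (RLoc D) (p.map (f : C →+* D)) := by
  exact IsLocalization.lift_eq (M := RSigma C) (S := RLoc C) _ p

lemma ev0R_algebraMap (p : Polynomial C) :
    ev0R B C (algebraMap (Polynomial C) (RLoc C) p) = p.eval 0 := by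
  simp [ev0R, IsLocalization.liftAlgHom_apply, IsLocalization.lift_eq]

lemma ev1R_algebraMap (p : Polynomial C) :
    ev1R B C (algebraMap (Polynomial C) (RLoc C) p) = p.eval 1 := by
  simp [ev1R, IsLocalization.liftAlgHom_apply, IsLocalization.lift_eq]

lemma ev0R_comp_mapRLoc (f : C →ₐ[B] D) :
    (ev0R B D).comp (mapRLoc f) = f.comp (ev0R B C) := by
  apply AlgHom.coe_ringHom_injective
  apply IsLocalization.ringHom_ext (RSigma C)
  refine RingHom.ext fun p => ?_
  simp [mapRLoc_algebraMap, ev0R_algebraMap, Polynomial.eval_zero_map]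

lemma ev1R_comp_mapRLoc (f : C →ₐ[B] D) :
    (ev1R B D).comp (mapRLoc f) = f.comp (ev1R B C) := by
  apply AlgHom.coe_ringHom_injective
  apply IsLocalization.ringHom_ext (RSigma C)
  refine RingHom.ext fun p => ?_
  simp [mapRLoc_algebraMap, ev1R_algebraMap, Polynomial.eval_one_map]

variable {F : SetValuedFunctor B}

lemma DirectR.mapF (f : C →ₐ[B] D) {x₀ x₁ : F.obj C} (h : DirectR B F C x₀ x₁) :
    DirectR B F D (F.map f x₀) (F.map f x₁) := by
  obtain ⟨x, h0, h1⟩ := h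
  refine ⟨F.map (mapRLoc f) x, ?_, ?_⟩
  · have := congrFun (F.map_comp (mapRLoc f) (ev0R B D)) x
    rw [Function.comp_apply] at this
    rw [← this, ev0R_comp_mapRLoc, F.map_comp, Function.comp_apply, h0]
  · have := congrFun (F.map_comp (mapRLoc f) (ev1R B D)) x
    rw [Function.comp_apply] at this
    rw [← this, ev1R_comp_mapRLoc, F.map_comp, Function.comp_apply, h1]

lemma REquiv.mapF (f : C →ₐ[B] D) {x₀ x₁ : F.obj C} (h : REquiv B F C x₀ x₁) :
    REquiv B F D (F.map f x₀) (F.map f x₁) := by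
  induction h with
  | rel a b hab => exact Relation.EqvGen.rel _ _ (hab.mapF f)
  | refl a => exact Relation.EqvGen.refl _
  | symm a b _ ih => exact ih.symm _ _
  | trans a b c _ _ ih₁ ih₂ => exact ih₁.trans _ _ _ ih₂

end Aux

section Homotopy

variable {B : Type u} [CommRing B]

/-- The homotopy `u ↦ t·u`, as a map `B[u] → (B[u])[t]_Σ`. -/
def homotopyHom (B : Type u) [CommRing B] : Polynomial B →ₐ[B] RLoc (Polynomial B) :=
  (IsScalarTower.toAlgHom B (Polynomial (Polynomial B)) (RLoc (Polynomial B))).comp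
    (Polynomial.aeval (X * Polynomial.C X : Polynomial (Polynomial B)))

lemma ev0R_comp_homotopyHom :
    (ev0R B (Polynomial B)).comp (homotopyHom B)
      = (Algebra.ofId B (Polynomial B)).comp (Polynomial.aeval (0 : B)) := by
  apply Polynomial.algHom_ext
  simp [homotopyHom, ev0R_algebraMap]

lemma ev1R_comp_homotopyHom :
    (ev1R B (Polynomial B)).comp (homotopyHom B) = AlgHom.id B (Polynomial B) := by
  apply Polynomial.algHom_ext
  simp [homotopyHom, ev1R_algebraMap]

lemma aeval_zero_comp_ofId :
    (Polynomial.aeval (0 : B) : Polynomial B →ₐ[B] B).comp (Algebra.ofId B (Polynomial B))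
      = AlgHom.id B B := by
  apply AlgHom.ext
  intro b
  simpa using ((Polynomial.aeval (0 : B)).comp (Algebra.ofId B (Polynomial B))).commutes b

end Homotopy

/-!
STATEMENT 6: Let `B` be a commutative ring and `F` a functor from commutative
`B`-algebras to sets.  Then the map `F(B)/R → F(B[u])/R` induced by the inclusion
`B → B[u]` is bijective.  (Bijectivity of the induced map on R-equivalence classes
is expressed elementwise: it is surjective and injective on classes.)
-/

theorem homotopy_invariance_of_R_equivalence_classes
    (B : Type u) [CommRing B] (F : SetValuedFunctor B) :
    -- injectivity of `F(B)/R → F(B[u])/R`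
    (∀ x₀ x₁ : F.obj B,
        REquiv B F (Polynomial B)
          (F.map (Algebra.ofId B (Polynomial B)) x₀)
          (F.map (Algebra.ofId B (Polynomial B)) x₁) →
        REquiv B F B x₀ x₁) ∧
    -- surjectivity of `F(B)/R → F(B[u])/R`
    (∀ y : F.obj (Polynomial B), ∃ x : F.obj B,
        REquiv B F (Polynomial B) (F.map (Algebra.ofId B (Polynomial B)) x) y) := by
  constructor
  · intro x₀ x₁ h
    have h' := h.mapF (Polynomial.aeval (0 : B) : Polynomial B →ₐ[B] B)
    have key : ∀ x : F.obj B,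
        F.map (Polynomial.aeval (0 : B) : Polynomial B →ₐ[B] B)
          (F.map (Algebra.ofId B (Polynomial B)) x) = x := by
      intro x
      have := congrFun (F.map_comp (Algebra.ofId B (Polynomial B))
        (Polynomial.aeval (0 : B) : Polynomial B →ₐ[B] B)) x
      rw [Function.comp_apply] at this
      rw [← this, aeval_zero_comp_ofId, F.map_id]
      rfl
    rwa [key x₀, key x₁] at h'
  · intro y
    refine ⟨F.map (Polynomial.aeval (0 : B) : Polynomial B →ₐ[B] B) y, ?_⟩
    refine Relation.EqvGen.rel _ _ ⟨F.map (homotopyHom B) y, ?_, ?_⟩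
    · have := congrFun (F.map_comp (homotopyHom B) (ev0R B (Polynomial B))) y
      rw [Function.comp_apply] at this
      rw [← this, ev0R_comp_homotopyHom, F.map_comp, Function.comp_apply]
    · have := congrFun (F.map_comp (homotopyHom B) (ev1R B (Polynomial B))) y
      rw [Function.comp_apply] at this
      rw [← this, ev1R_comp_homotopyHom, F.map_id]
      rfl
end
end

section
/- Let B be a commutative ring and let C be a commutative B-algebra which, as a B-module, is finite locally free of rank d ≥ 1 (finitely generated, projective, of constant rank d). Let Σ_B ⊆ B[t] and Σ_C ⊆ C[t] denote the multiplicative subsets of polynomials whose values at t = 0 and t = 1 are units. Then the natural C-algebra homomorphism B[t]_{Σ_B} ⊗_B C → C[t]_{Σ_C}, induced by the inclusion B[t] → C[t] (which carries Σ_B into Σ_C) and the structure map C → C[t]_{Σ_C}, is an isomorphism. -/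
noncomputable section

open Polynomial

open TensorProduct

attribute [local instance] Algebra.TensorProduct.rightAlgebra

universe u

variable (B C : Type u) [CommRing B] [CommRing C] [Algebra B C]

/-- The inclusion `B[t] → C[t]`, extended to a `B`-algebra homomorphism
`B[t]_{Σ_B} → C[t]_{Σ_C}` (using that it carries `Σ_B` into `Σ_C`). -/
def locMap : RLoc B →ₐ[B] RLoc C :=
  IsLocalization.liftAlgHom (M := RSigma B)
    (f := (IsScalarTower.toAlgHom B (Polynomial C) (RLoc C)).comp
      (Polynomial.mapAlgHom (Algebra.ofId B C)))
    (fun y => by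
      have hmem : Polynomial.map (algebraMap B C) (y : Polynomial B) ∈ RSigma C :=
        mem_RSigma.mpr
          ⟨by rw [Polynomial.eval_zero_map]; exact ((mem_RSigma.mp y.2).1).map _,
           by rw [Polynomial.eval_one_map]; exact ((mem_RSigma.mp y.2).2).map _⟩
      have hu := IsLocalization.map_units (M := RSigma C) (RLoc C) ⟨_, hmem⟩
      simpa [Polynomial.mapAlgHom, Algebra.ofId, IsScalarTower.coe_toAlgHom'] using hu)

/-- The structure map `C → C[t]_{Σ_C}` as a `B`-algebra homomorphism. -/
def cToLoc : C →ₐ[B] RLoc C :=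
  (IsScalarTower.toAlgHom B (Polynomial C) (RLoc C)).comp
    (IsScalarTower.toAlgHom B C (Polynomial C))

/-- The natural `C`-algebra homomorphism `B[t]_{Σ_B} ⊗_B C → C[t]_{Σ_C}` induced by
the inclusion `B[t] → C[t]` and the structure map `C → C[t]_{Σ_C}`. -/
def tensorToLoc : (RLoc B ⊗[B] C) →ₐ[C] RLoc C :=
  { Algebra.TensorProduct.productMap (locMap B C) (cToLoc B C) with
    commutes' := fun c => by
      show Algebra.TensorProduct.productMap (locMap B C) (cToLoc B C)
          ((1 : RLoc B) ⊗ₜ[B] c) = algebraMap C (RLoc C) c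
      rw [Algebra.TensorProduct.productMap_apply_tmul, map_one, one_mul,
        IsScalarTower.algebraMap_apply C (Polynomial C) (RLoc C)]
      simp [cToLoc, IsScalarTower.coe_toAlgHom'] }

/-!
STATEMENT 9: Let `B` be a commutative ring and `C` a commutative `B`-algebra which, as
a `B`-module, is finite locally free of rank `d ≥ 1`.  Then the natural `C`-algebra
homomorphism `B[t]_{Σ_B} ⊗_B C → C[t]_{Σ_C}` is an isomorphism.
-/

/-! ### Auxiliary: a "norm" argument.
For a finite projective algebra `S` over `R`, any polynomial `P ∈ S[X]` whose values at
`0` and `1` are units divides (the image of) a polynomial `σ ∈ Σ_R ⊆ R[X]`. -/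

section AuxDvd

open Polynomial Matrix

variable {R S : Type*} [CommRing R] [CommRing S] [Algebra R S]
variable {n : ℕ} (g : S →ₗ[R] (Fin n → R)) (h : (Fin n → R) →ₗ[R] S)

/-- Coefficientwise application of `g`, turning a polynomial over `S` into a vector of
polynomials over `R`. -/
noncomputable def iotaP (q : S[X]) : Fin n → R[X] :=
  fun i => q.sum fun k c => Polynomial.monomial k (g c i)

lemma iotaP_coeff (q : S[X]) (i : Fin n) (m : ℕ) :
    (iotaP g q i).coeff m = g (q.coeff m) i := by
  classical
  rw [iotaP, Polynomial.sum, finset_sum_coeff]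
  simp only [coeff_monomial]
  rw [Finset.sum_ite_eq' q.support m (fun k => g (q.coeff k) i)]
  split_ifs with hm
  · rfl
  · rw [Polynomial.notMem_support_iff.mp hm, map_zero]
    rfl

lemma iotaP_add (q q' : S[X]) : iotaP g (q + q') = iotaP g q + iotaP g q' := by
  funext i; ext m
  simp [iotaP_coeff, coeff_add]

lemma iotaP_smul (s : R[X]) (q : S[X]) :
    iotaP g (Polynomial.map (algebraMap R S) s * q) = s • iotaP g q := by
  funext i; ext m
  rw [Pi.smul_apply, smul_eq_mul, iotaP_coeff, coeff_mul, coeff_mul]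
  rw [map_sum g, Finset.sum_apply]
  refine Finset.sum_congr rfl fun ab _ => ?_
  rw [coeff_map, ← Algebra.smul_def, LinearMap.map_smul, Pi.smul_apply, smul_eq_mul, iotaP_coeff]

lemma iotaP_eq_zero (hgh : h ∘ₗ g = LinearMap.id) {w : S[X]} (hw : iotaP g w = 0) : w = 0 := by
  have hg : ∀ x, h (g x) = x := fun x => congrArg (fun f => f x) hgh
  ext m
  have hgm : g (w.coeff m) = 0 := by
    funext i
    have := congrFun hw i
    have h2 : (iotaP g w i).coeff m = 0 := by rw [this]; rfl
    rw [iotaP_coeff] at h2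
    exact h2
  have := hg (w.coeff m)
  rw [hgm, map_zero] at this
  simp [← this]

/-- The matrix over `R[X]` of "multiplication by `P` on `S[X]`, extended by the identity". -/
noncomputable def uMat (P : S[X]) : Matrix (Fin n) (Fin n) R[X] :=
  (∑ k ∈ P.support, (X : R[X]) ^ k •
      (LinearMap.toMatrix' (g ∘ₗ LinearMap.mulLeft R (P.coeff k) ∘ₗ h)).map
        (⇑(Polynomial.C : R →+* R[X])))
    + (1 - (LinearMap.toMatrix' (g ∘ₗ h)).map (⇑(Polynomial.C : R →+* R[X])))

lemma toMatrix'_mulVec (f : (Fin n → R) →ₗ[R] (Fin n → R)) (w : Fin n → R) :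
    LinearMap.toMatrix' f *ᵥ w = f w := by
  rw [← Matrix.toLin'_apply, Matrix.toLin'_toMatrix']

lemma mapC_mulVec_coeff (A : Matrix (Fin n) (Fin n) R) (v : Fin n → R[X]) (i : Fin n) (m : ℕ) :
    ((A.map (⇑(Polynomial.C : R →+* R[X])) *ᵥ v) i).coeff m
      = (A *ᵥ fun j => (v j).coeff m) i := by
  simp [Matrix.mulVec, dotProduct, finset_sum_coeff, coeff_C_mul, Matrix.map_apply]

lemma uMat_mulVec (hgh : h ∘ₗ g = LinearMap.id) (P q : S[X]) :
    uMat g h P *ᵥ iotaP g q = iotaP g (P * q) := by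
  classical
  have hg : ∀ x, h (g x) = x := fun x => congrArg (fun f => f x) hgh
  funext i; ext m
  rw [uMat, Matrix.add_mulVec, Matrix.sub_mulVec, Matrix.one_mulVec]
  -- sum of matrices mulVec
  have hsum : ((∑ k ∈ P.support, (X : R[X]) ^ k •
      (LinearMap.toMatrix' (g ∘ₗ LinearMap.mulLeft R (P.coeff k) ∘ₗ h)).map
        (⇑(Polynomial.C : R →+* R[X]))) *ᵥ iotaP g q) i
      = ∑ k ∈ P.support, (((X : R[X]) ^ k •
          ((LinearMap.toMatrix' (g ∘ₗ LinearMap.mulLeft R (P.coeff k) ∘ₗ h)).map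
            (⇑(Polynomial.C : R →+* R[X])) *ᵥ iotaP g q))) i := by
    simp [Matrix.mulVec, dotProduct, Matrix.sum_apply, Finset.sum_mul,
      Finset.sum_apply, Matrix.smul_mulVec]
    rw [Finset.sum_comm]
    refine Finset.sum_congr rfl fun k _ => ?_
    rw [Finset.mul_sum]
    refine Finset.sum_congr rfl fun j _ => ?_
    ring
  rw [Pi.add_apply, Pi.sub_apply, coeff_add, coeff_sub, hsum]
  rw [finset_sum_coeff]
  have hterm : ∀ k ∈ P.support,
      ((((X : R[X]) ^ k •
        ((LinearMap.toMatrix' (g ∘ₗ LinearMap.mulLeft R (P.coeff k) ∘ₗ h)).map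
          (⇑(Polynomial.C : R →+* R[X])) *ᵥ iotaP g q))) i).coeff m
      = if k ≤ m then g (P.coeff k * q.coeff (m - k)) i else 0 := by
    intro k _
    rw [Pi.smul_apply, smul_eq_mul, mul_comm, coeff_mul_X_pow']
    split_ifs with hk
    · rw [mapC_mulVec_coeff]
      have : (fun j => (iotaP g q j).coeff (m - k)) = g (q.coeff (m - k)) := by
        funext j; rw [iotaP_coeff]
      rw [this, toMatrix'_mulVec]
      simp [hg]
    · rfl
  rw [Finset.sum_congr rfl hterm]
  -- the identity-correction terms cancel
  have hE : (((LinearMap.toMatrix' (g ∘ₗ h)).map (⇑(Polynomial.C : R →+* R[X]))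
      *ᵥ iotaP g q) i).coeff m = g (q.coeff m) i := by
    rw [mapC_mulVec_coeff]
    have : (fun j => (iotaP g q j).coeff m) = g (q.coeff m) := by
      funext j; rw [iotaP_coeff]
    rw [this, toMatrix'_mulVec]
    simp [hg]
  rw [hE, iotaP_coeff, iotaP_coeff]
  -- now pure sum identity
  rw [coeff_mul, Finset.Nat.sum_antidiagonal_eq_sum_range_succ_mk, map_sum g, Finset.sum_apply]
  have h1 : ∀ k ∈ P.support,
      (if k ≤ m then g (P.coeff k * q.coeff (m - k)) i else 0)
        = if k ∈ Finset.range (m + 1) then g (P.coeff k * q.coeff (m - k)) i else 0 := by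
    intro k _
    simp [Finset.mem_range, Nat.lt_succ_iff]
  rw [Finset.sum_congr rfl h1, Finset.sum_ite_mem]
  have h2 : ∑ k ∈ P.support ∩ Finset.range (m + 1), g (P.coeff k * q.coeff (m - k)) i
      = ∑ k ∈ Finset.range (m + 1), g (P.coeff k * q.coeff (m - k)) i := by
    apply Finset.sum_subset Finset.inter_subset_right
    intro k hk hk'
    have : P.coeff k = 0 := by
      by_contra hc
      exact hk' (Finset.mem_inter.mpr ⟨Polynomial.mem_support_iff.mpr hc, hk⟩)
    rw [this, zero_mul, map_zero]
    rfl
  rw [h2]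
  abel

lemma uMat_pow_mulVec (hgh : h ∘ₗ g = LinearMap.id) (P q : S[X]) (k : ℕ) :
    (uMat g h P) ^ k *ᵥ iotaP g q = iotaP g (P ^ k * q) := by
  induction k generalizing q with
  | zero => simp [Matrix.one_mulVec]
  | succ k ih =>
    rw [pow_succ, ← Matrix.mulVec_mulVec, uMat_mulVec g h hgh, ih (P * q)]
    congr 1
    ring

lemma aeval_uMat_mulVec (hgh : h ∘ₗ g = LinearMap.id) (P q : S[X]) (χ : Polynomial R[X]) :
    (Polynomial.aeval (uMat g h P) χ) *ᵥ iotaP g q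
      = iotaP g (χ.eval₂ (mapRingHom (algebraMap R S)) P * q) := by
  induction χ using Polynomial.induction_on' with
  | add p r hp hr =>
    rw [map_add, Matrix.add_mulVec, hp, hr, eval₂_add, add_mul, iotaP_add]
  | monomial k s =>
    rw [aeval_monomial, eval₂_monomial, ← Algebra.smul_def, Matrix.smul_mulVec,
      uMat_pow_mulVec g h hgh, ← iotaP_smul]
    congr 1
    rw [coe_mapRingHom, mul_assoc]

lemma mulLeft_eval_eq_sum (P : S[X]) (r : R) :
    LinearMap.mulLeft R (P.eval (algebraMap R S r))
      = ∑ k ∈ P.support, r ^ k • LinearMap.mulLeft R (P.coeff k) := by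
  ext c
  rw [LinearMap.sum_apply]
  rw [eval_eq_sum, Polynomial.sum]
  simp only [LinearMap.mulLeft_apply, LinearMap.smul_apply, Finset.sum_mul]
  refine Finset.sum_congr rfl fun k _ => ?_
  rw [Algebra.smul_def, map_pow]
  ring

lemma det_unit_aux (hgh : h ∘ₗ g = LinearMap.id) (c : Sˣ) :
    IsUnit (LinearMap.det
      (g ∘ₗ LinearMap.mulLeft R (c : S) ∘ₗ h + (LinearMap.id - g ∘ₗ h))) := by
  have hg : ∀ x, h (g x) = x := fun x => congrArg (fun f => f x) hgh
  set a := g ∘ₗ LinearMap.mulLeft R (c : S) ∘ₗ h + (LinearMap.id - g ∘ₗ h) with ha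
  set b := g ∘ₗ LinearMap.mulLeft R ((c⁻¹ : Sˣ) : S) ∘ₗ h + (LinearMap.id - g ∘ₗ h) with hb
  have hab : a ∘ₗ b = LinearMap.id := by
    apply LinearMap.ext
    intro x
    simp only [ha, hb, LinearMap.comp_apply, LinearMap.add_apply, LinearMap.sub_apply,
      LinearMap.id_apply, LinearMap.mulLeft_apply, map_add, map_sub, hg]
    rw [Units.mul_inv_cancel_left]
    abel
  have hba : b ∘ₗ a = LinearMap.id := by
    apply LinearMap.ext
    intro x
    simp only [ha, hb, LinearMap.comp_apply, LinearMap.add_apply, LinearMap.sub_apply,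
      LinearMap.id_apply, LinearMap.mulLeft_apply, map_add, map_sub, hg]
    rw [Units.inv_mul_cancel_left]
    abel
  have hu : IsUnit a := isUnit_iff_exists.mpr ⟨b, hab, hba⟩
  exact hu.map LinearMap.det

lemma uMat_map_eval (P : S[X]) (r : R) :
    (uMat g h P).map (⇑(Polynomial.evalRingHom r : R[X] →+* R))
      = LinearMap.toMatrix'
        (g ∘ₗ LinearMap.mulLeft R (P.eval (algebraMap R S r)) ∘ₗ h
          + (LinearMap.id - g ∘ₗ h)) := by
  classical
  rw [mulLeft_eval_eq_sum]
  have hcomp : g ∘ₗ (∑ k ∈ P.support, r ^ k • LinearMap.mulLeft R (P.coeff k)) ∘ₗ h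
      = ∑ k ∈ P.support, r ^ k • (g ∘ₗ LinearMap.mulLeft R (P.coeff k) ∘ₗ h) := by
    apply LinearMap.ext
    intro x
    simp [LinearMap.sum_apply, map_sum]
  rw [hcomp]
  rw [map_add, map_sub, map_sum]
  ext i j
  simp only [uMat, Matrix.map_apply, Matrix.add_apply, Matrix.sub_apply, Matrix.sum_apply,
    Matrix.smul_apply, Matrix.one_apply, smul_eq_mul, map_sum, LinearMap.toMatrix'_id,
    LinearEquiv.map_smulₛₗ, RingHom.id_apply]
  simp only [coe_evalRingHom, eval_finset_sum, apply_ite (Polynomial.eval r), eval_add,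
    eval_sub, eval_mul, eval_pow, eval_X, eval_C, eval_one, eval_zero]

lemma isUnit_charpoly_coeff_zero {N : Matrix (Fin n) (Fin n) R} (hd : IsUnit N.det) :
    IsUnit (N.charpoly.coeff 0) := by
  have h1 := Matrix.det_eq_sign_charpoly_coeff N
  have h2 : N.charpoly.coeff 0 = (-1 : R) ^ (Fintype.card (Fin n)) * N.det := by
    rw [h1, ← mul_assoc, ← mul_pow]
    simp
  rw [h2]
  exact (isUnit_one.neg.pow _).mul hd

theorem exists_sigma_dvd [Module.Finite R S] [Module.Projective R S]
    (P : S[X]) (hP0 : IsUnit (P.eval 0)) (hP1 : IsUnit (P.eval 1)) :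
    ∃ σ : R[X], (IsUnit (σ.eval 0) ∧ IsUnit (σ.eval 1)) ∧
      ∃ Q : S[X], σ.map (algebraMap R S) = P * Q := by
  obtain ⟨n, h, hs⟩ := Module.Finite.exists_fin' R S
  obtain ⟨g, hgh⟩ := Module.projective_lifting_property h LinearMap.id hs
  have hCH : Polynomial.aeval (uMat g h P) (uMat g h P).charpoly = 0 :=
    Matrix.aeval_self_charpoly _
  have h00 : iotaP g (((uMat g h P).charpoly.eval₂ (mapRingHom (algebraMap R S)) P) * 1) = 0 := by
    rw [← aeval_uMat_mulVec g h hgh P 1, hCH, Matrix.zero_mulVec]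
  rw [mul_one] at h00
  have hz : (uMat g h P).charpoly.eval₂ (mapRingHom (algebraMap R S)) P = 0 :=
    iotaP_eq_zero g h hgh h00
  have hu : ∀ r : R, IsUnit (P.eval (algebraMap R S r)) →
      IsUnit (((uMat g h P).charpoly.coeff 0).eval r) := by
    intro r hr
    have e1 : (((uMat g h P).charpoly).coeff 0).eval r
        = ((uMat g h P).map (⇑(Polynomial.evalRingHom r : R[X] →+* R))).charpoly.coeff 0 := by
      rw [Matrix.charpoly_map, coeff_map]
      rfl
    rw [e1, uMat_map_eval]
    apply isUnit_charpoly_coeff_zero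
    rw [LinearMap.det_toMatrix']
    have := det_unit_aux g h hgh hr.unit
    rwa [IsUnit.unit_spec] at this
  refine ⟨(uMat g h P).charpoly.coeff 0,
    ⟨hu 0 (by rwa [RingHom.map_zero]), hu 1 (by rwa [RingHom.map_one])⟩,
    -((uMat g h P).charpoly.divX.eval₂ (mapRingHom (algebraMap R S)) P), ?_⟩
  have hsplit := congrArg (Polynomial.eval₂ (mapRingHom (algebraMap R S)) P)
    (Polynomial.X_mul_divX_add (uMat g h P).charpoly)
  rw [hz, eval₂_add, eval₂_mul, eval₂_X, eval₂_C, coe_mapRingHom] at hsplit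
  linear_combination hsplit

end AuxDvd

/-! ### Auxiliary: `S[X]` is the base change of `S` along `R → R[X]`. -/

section AuxBC

open Polynomial

variable {R S : Type*} [CommRing R] [CommRing S] [Algebra R S]

theorem polynomial_isBaseChange
    [Algebra (Polynomial R) (Polynomial S)]
    [IsScalarTower R (Polynomial R) (Polynomial S)]
    (halg : algebraMap (Polynomial R) (Polynomial S) = mapRingHom (algebraMap R S)) :
    IsBaseChange (Polynomial R) ((IsScalarTower.toAlgHom R S (Polynomial S)).toLinearMap) := by
  apply IsBaseChange.of_lift_unique
  intro Q _ _ _ _ f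
  classical
  -- the additive lift
  let F : ℕ → S → Q := fun k c => (Polynomial.monomial k (1 : R) : R[X]) • f c
  have hF0 : ∀ k, F k 0 = 0 := fun k => by simp [F]
  have hFadd : ∀ k c c', F k (c + c') = F k c + F k c' := fun k c c' => by
    simp [F, map_add, smul_add]
  let l₀ : S[X] →+ Q :=
    { toFun := fun p => p.sum F
      map_zero' := Polynomial.sum_zero_index F
      map_add' := fun p q => Polynomial.sum_add_index p q F hF0 hFadd }
  have hl₀_monomial : ∀ (k : ℕ) (c : S),
      l₀ (Polynomial.monomial k c) = (Polynomial.monomial k (1 : R) : R[X]) • f c := by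
    intro k c
    exact Polynomial.sum_monomial_index c F (hF0 k)
  have hsmul : ∀ (s : R[X]) (p : S[X]), l₀ (s • p) = s • l₀ p := by
    intro s p
    induction s using Polynomial.induction_on' with
    | add u v hu hv => rw [add_smul, map_add, hu, hv, add_smul]
    | monomial i b =>
      induction p using Polynomial.induction_on' with
      | add u v hu hv => rw [smul_add, map_add, hu, hv, map_add, smul_add]
      | monomial k c =>
        have e1 : (Polynomial.monomial i b : R[X]) • (Polynomial.monomial k c : S[X])
            = Polynomial.monomial (i + k) (algebraMap R S b * c) := by
          rw [Algebra.smul_def, halg, coe_mapRingHom, Polynomial.map_monomial,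
            Polynomial.monomial_mul_monomial]
        rw [e1, hl₀_monomial, hl₀_monomial]
        rw [← Algebra.smul_def, map_smul]
        rw [smul_smul, Polynomial.monomial_mul_monomial, mul_one]
        rw [← algebraMap_smul (R := R) (R[X]) b (f c), smul_smul]
        congr 1
        rw [show (algebraMap R R[X]) b = Polynomial.C b from rfl, mul_comm,
          Polynomial.C_mul_monomial, mul_one]
  let l : S[X] →ₗ[R[X]] Q :=
    { toFun := l₀
      map_add' := l₀.map_add
      map_smul' := hsmul }
  have hl_monomial : ∀ (k : ℕ) (c : S),
      l (Polynomial.monomial k c) = (Polynomial.monomial k (1 : R) : R[X]) • f c :=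
    hl₀_monomial
  have hkey : ∀ c : S, (algebraMap S S[X]) c = Polynomial.monomial 0 c := by
    intro c
    rw [Polynomial.monomial_zero_left]
    rfl
  refine ⟨l, ?_, ?_⟩
  · apply LinearMap.ext
    intro c
    show l ((algebraMap S S[X]) c) = f c
    rw [hkey, hl_monomial, Polynomial.monomial_zero_one, one_smul]
  · intro l' hl'
    apply LinearMap.ext
    intro p
    induction p using Polynomial.induction_on' with
    | add u v hu hv => rw [map_add, map_add, hu, hv]
    | monomial k c =>
      have e2 : (Polynomial.monomial k c : S[X])
          = (Polynomial.monomial k (1 : R) : R[X]) • ((algebraMap S S[X]) c) := by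
        rw [Algebra.smul_def, halg, coe_mapRingHom, Polynomial.map_monomial, map_one]
        rw [show (algebraMap S S[X]) c = Polynomial.C c from rfl, mul_comm,
          Polynomial.C_mul_monomial, mul_one]
      rw [e2, map_smul, map_smul]
      congr 1
      have h1 : l' ((algebraMap S S[X]) c) = f c := LinearMap.congr_fun hl' c
      have h2 : l ((algebraMap S S[X]) c) = f c := by
        rw [hkey, hl_monomial, Polynomial.monomial_zero_one, one_smul]
      rw [h1, h2]

end AuxBC


set_option maxHeartbeats 2000000 in
theorem tensorToLoc_bijective
    [Module.Finite B C] [Module.Projective B C] (d : ℕ) (hd : 1 ≤ d)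
    (hrank : ∀ P : PrimeSpectrum B,
      Module.finrank (Localization.AtPrime P.asIdeal)
        (LocalizedModule P.asIdeal.primeCompl C) = d) :
    Function.Bijective (tensorToLoc B C) := by
  classical
  letI : Algebra (Polynomial B) (Polynomial C) := (mapRingHom (algebraMap B C)).toAlgebra
  haveI : IsScalarTower B (Polynomial B) (Polynomial C) :=
    IsScalarTower.of_algebraMap_eq' (by
      apply RingHom.ext
      intro b
      show Polynomial.C (algebraMap B C b) = mapRingHom (algebraMap B C) (Polynomial.C b)
      rw [coe_mapRingHom, Polynomial.map_C])
  let x : RLoc B ⊗[B] C := (algebraMap (Polynomial B) (RLoc B) X) ⊗ₜ[B] (1 : C)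
  let φ : Polynomial C →ₐ[C] (RLoc B ⊗[B] C) := Polynomial.aeval x
  letI : Algebra (Polynomial C) (RLoc B ⊗[B] C) := RingHom.toAlgebra' (φ : Polynomial C →+* RLoc B ⊗[B] C) (fun a b => by exact mul_comm (φ a) b)
  haveI hTower2 : IsScalarTower (Polynomial B) (Polynomial C) (RLoc B ⊗[B] C) := by
    apply IsScalarTower.of_algebraMap_eq'
    apply Polynomial.ringHom_ext
    · intro b
      show (algebraMap (Polynomial B) (RLoc B)) (Polynomial.C b) ⊗ₜ[B] (1 : C)
          = φ (algebraMap (Polynomial B) (Polynomial C) (Polynomial.C b))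
      rw [show algebraMap (Polynomial B) (Polynomial C) (Polynomial.C b)
            = Polynomial.C (algebraMap B C b) by
          show mapRingHom (algebraMap B C) (Polynomial.C b) = _
          rw [coe_mapRingHom, Polynomial.map_C]]
      rw [show (φ (Polynomial.C (algebraMap B C b)) : RLoc B ⊗[B] C)
            = algebraMap C (RLoc B ⊗[B] C) (algebraMap B C b) from Polynomial.aeval_C _ _]
      rw [show algebraMap (Polynomial B) (RLoc B) (Polynomial.C b)
            = algebraMap B (RLoc B) b from
          (IsScalarTower.algebraMap_apply B (Polynomial B) (RLoc B) b).symm]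
      rw [show algebraMap C (RLoc B ⊗[B] C) (algebraMap B C b)
            = (1 : RLoc B) ⊗ₜ[B] (algebraMap B C b) from rfl]
      rw [← Algebra.TensorProduct.algebraMap_apply, Algebra.TensorProduct.algebraMap_apply']
    · show (algebraMap (Polynomial B) (RLoc B)) X ⊗ₜ[B] (1 : C)
          = φ (algebraMap (Polynomial B) (Polynomial C) X)
      rw [show algebraMap (Polynomial B) (Polynomial C) X = (X : Polynomial C) by
        show mapRingHom (algebraMap B C) X = _; rw [coe_mapRingHom, Polynomial.map_X]]
      rw [show φ (X : Polynomial C) = x from Polynomial.aeval_X x]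
  have hbc1 : IsBaseChange (Polynomial B)
      ((IsScalarTower.toAlgHom B C (Polynomial C)).toLinearMap) :=
    polynomial_isBaseChange rfl
  have hcomp : (((IsScalarTower.toAlgHom (Polynomial B) (Polynomial C)
        (RLoc B ⊗[B] C)).toLinearMap).restrictScalars B) ∘ₗ
        (IsScalarTower.toAlgHom B C (Polynomial C)).toLinearMap
      = TensorProduct.mk B (RLoc B) C 1 := by
    apply LinearMap.ext
    intro c
    show φ (algebraMap C (Polynomial C) c) = (1 : RLoc B) ⊗ₜ[B] c
    rw [show algebraMap C (Polynomial C) c = Polynomial.C c from rfl, Polynomial.aeval_C]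
    rfl
  have hbc : IsBaseChange (RLoc B)
      ((IsScalarTower.toAlgHom (Polynomial B) (Polynomial C) (RLoc B ⊗[B] C)).toLinearMap) := by
    apply IsBaseChange.of_comp hbc1
    rw [show ((IsScalarTower.toAlgHom (Polynomial B) (Polynomial C)
        (RLoc B ⊗[B] C)).toLinearMap : Polynomial C →ₗ[B] RLoc B ⊗[B] C) ∘ₗ
        (IsScalarTower.toAlgHom B C (Polynomial C)).toLinearMap
      = TensorProduct.mk B (RLoc B) C 1 from hcomp]
    exact TensorProduct.isBaseChange B C (RLoc B)
  haveI : IsLocalizedModule (RSigma B)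
      ((IsScalarTower.toAlgHom (Polynomial B) (Polynomial C) (RLoc B ⊗[B] C)).toLinearMap) :=
    (isLocalizedModule_iff_isBaseChange (RSigma B) (RLoc B) _).mpr hbc
  haveI hloc1 : IsLocalization (Algebra.algebraMapSubmonoid (Polynomial C) (RSigma B))
      (RLoc B ⊗[B] C) := isLocalizedModule_iff_isLocalization.mp ‹_›
  haveI hloc2 : IsLocalization (RSigma C) (RLoc B ⊗[B] C) := by
    apply IsLocalization.of_le_of_exists_dvd
      (Algebra.algebraMapSubmonoid (Polynomial C) (RSigma B)) (RSigma C)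
    · rintro _ ⟨σ, hσ, rfl⟩
      refine mem_RSigma.mpr ⟨?_, ?_⟩
      · rw [show algebraMap (Polynomial B) (Polynomial C) σ
            = σ.map (algebraMap B C) from rfl, Polynomial.eval_zero_map]
        exact (mem_RSigma.mp hσ).1.map _
      · rw [show algebraMap (Polynomial B) (Polynomial C) σ
            = σ.map (algebraMap B C) from rfl, Polynomial.eval_one_map]
        exact (mem_RSigma.mp hσ).2.map _
    · intro P hP
      obtain ⟨σ, ⟨h0, h1⟩, Q, hQ⟩ := exists_sigma_dvd (R := B) P (mem_RSigma.mp hP).1 (mem_RSigma.mp hP).2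
      refine ⟨algebraMap (Polynomial B) (Polynomial C) σ,
        ⟨σ, mem_RSigma.mpr ⟨h0, h1⟩, rfl⟩, ⟨Q, ?_⟩⟩
      rw [show algebraMap (Polynomial B) (Polynomial C) σ = σ.map (algebraMap B C) from rfl]
      exact hQ
  haveI : IsLocalization (RSigma C) (RLoc C) := Localization.isLocalization
  let e := IsLocalization.algEquiv (RSigma C) (RLoc B ⊗[B] C) (RLoc C)
  have hφX : φ X = (algebraMap (Polynomial B) (RLoc B) X) ⊗ₜ[B] (1 : C) :=
    Polynomial.aeval_X x
  have key : (tensorToLoc B C).comp φ = IsScalarTower.toAlgHom C (Polynomial C) (RLoc C) := by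
    apply Polynomial.algHom_ext
    show tensorToLoc B C (φ X) = _
    rw [hφX]
    show Algebra.TensorProduct.productMap (locMap B C) (cToLoc B C)
        (algebraMap (Polynomial B) (RLoc B) X ⊗ₜ[B] 1) = _
    rw [Algebra.TensorProduct.productMap_apply_tmul, map_one, mul_one]
    rw [locMap, IsLocalization.liftAlgHom_apply, IsLocalization.lift_eq]
    simp [IsScalarTower.coe_toAlgHom']
  have heq : (tensorToLoc B C).toRingHom
      = ((e : (RLoc B ⊗[B] C) ≃ₐ[Polynomial C] RLoc C) : (RLoc B ⊗[B] C) →+* RLoc C) := by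
    refine IsLocalization.ringHom_ext (S := RLoc B ⊗[B] C) (RSigma C) (RingHom.ext fun p => ?_)
    have h1 : tensorToLoc B C (φ p) = algebraMap (Polynomial C) (RLoc C) p :=
      AlgHom.congr_fun key p
    have h2 : e (φ p) = algebraMap (Polynomial C) (RLoc C) p := AlgEquiv.commutes e p
    show tensorToLoc B C (φ p) = e (φ p)
    rw [h1, h2]
  have hfun : ⇑(tensorToLoc B C) = ⇑e := by
    funext z
    exact RingHom.congr_fun heq z
  rw [show ⇑(tensorToLoc B C) = ⇑e from hfun]
  exact e.bijective
end
end

section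
/- Let B be a commutative ring, let A be a commutative B-algebra and let f ∈ A. Let x₀, x₁ : A → B be B-algebra homomorphisms with x₀(f) ∈ B^× and x₁(f) ∈ B^×. Suppose there exists a B-algebra homomorphism x : A → B[t]_Σ with ev₀ ∘ x = x₀ and ev₁ ∘ x = x₁. Then x(f) is a unit in B[t]_Σ; in particular x factors through the localization A_f, so x₀ and x₁ (viewed as B-algebra homomorphisms A_f → B) are directly R-equivalent as points of Spec(A_f). -/
/-!
STATEMENT 11: Let `B` be a commutative ring, `A` a commutative `B`-algebra and `f ∈ A`.
Let `x₀, x₁ : A → B` be `B`-algebra homomorphisms with `x₀(f), x₁(f) ∈ B^×`, and suppose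
there is a `B`-algebra homomorphism `x : A → B[t]_Σ` with `ev₀ ∘ x = x₀`, `ev₁ ∘ x = x₁`.
Then `x(f)` is a unit of `B[t]_Σ`; in particular `x` factors through `A_f`, so `x₀` and
`x₁` (viewed as points of `Spec A_f`) are directly R-equivalent.
-/

noncomputable section

open Polynomial

theorem ev0_algebraMap {B : Type*} [CommRing B] (p : Polynomial B) :
    ev0 B (algebraMap (Polynomial B) (RLoc B) p) = p.eval 0 := by
  simp [ev0, IsLocalization.liftAlgHom_apply, IsLocalization.lift_eq]

theorem ev1_algebraMap {B : Type*} [CommRing B] (p : Polynomial B) :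
    ev1 B (algebraMap (Polynomial B) (RLoc B) p) = p.eval 1 := by
  simp [ev1, IsLocalization.liftAlgHom_apply, IsLocalization.lift_eq]

theorem isUnit_of_ev {B : Type*} [CommRing B] (z : RLoc B)
    (h0 : IsUnit (ev0 B z)) (h1 : IsUnit (ev1 B z)) : IsUnit z := by
  obtain ⟨⟨p, s⟩, rfl⟩ := IsLocalization.mk'_surjective (RSigma B) z
  have hspec := IsLocalization.mk'_spec (RLoc B) p s
  have hs := mem_RSigma.mp s.2
  have hp : p ∈ RSigma B := by
    constructor
    · have := congrArg (ev0 B) hspec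
      rw [map_mul, ev0_algebraMap, ev0_algebraMap] at this
      rw [← this]; exact h0.mul hs.1
    · have := congrArg (ev1 B) hspec
      rw [map_mul, ev1_algebraMap, ev1_algebraMap] at this
      rw [← this]; exact h1.mul hs.2
  have : IsUnit (algebraMap (Polynomial B) (RLoc B) p) :=
    IsLocalization.map_units (RLoc B) ⟨p, hp⟩
  rw [← hspec] at this
  exact isUnit_of_mul_isUnit_left this

theorem direct_R_equivalence_lifts_to_principal_open
    (B : Type*) [CommRing B] (A : Type*) [CommRing A] [Algebra B A] (f : A)
    (x₀ x₁ : A →ₐ[B] B) (h₀ : IsUnit (x₀ f)) (h₁ : IsUnit (x₁ f))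
    (x : A →ₐ[B] RLoc B)
    (hx₀ : (ev0 B).comp x = x₀) (hx₁ : (ev1 B).comp x = x₁) :
    IsUnit (x f) ∧
      ∃ (x' : Localization.Away f →ₐ[B] RLoc B)
        (y₀ y₁ : Localization.Away f →ₐ[B] B),
        x'.comp (IsScalarTower.toAlgHom B A (Localization.Away f)) = x ∧
        y₀.comp (IsScalarTower.toAlgHom B A (Localization.Away f)) = x₀ ∧
        y₁.comp (IsScalarTower.toAlgHom B A (Localization.Away f)) = x₁ ∧
        (ev0 B).comp x' = y₀ ∧ (ev1 B).comp x' = y₁ := by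
  have hxf : IsUnit (x f) := by
    apply isUnit_of_ev
    · rw [show ev0 B (x f) = x₀ f from congrArg (· f) hx₀]; exact h₀
    · rw [show ev1 B (x f) = x₁ f from congrArg (· f) hx₁]; exact h₁
  have hxpow : ∀ y : Submonoid.powers f, IsUnit (x y) := by
    rintro ⟨-, n, rfl⟩
    rw [map_pow]; exact hxf.pow n
  set x' : Localization.Away f →ₐ[B] RLoc B := IsLocalization.liftAlgHom (M := Submonoid.powers f) hxpow with hx'
  refine ⟨hxf, x', (ev0 B).comp x', (ev1 B).comp x', ?_, ?_, ?_, rfl, rfl⟩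
  · ext a
    rw [AlgHom.comp_apply, IsScalarTower.toAlgHom_apply, hx',
      IsLocalization.liftAlgHom_apply, IsLocalization.lift_eq]
    rfl
  · rw [← hx₀]; ext a
    rw [AlgHom.comp_apply, AlgHom.comp_apply, AlgHom.comp_apply,
      IsScalarTower.toAlgHom_apply, hx',
      IsLocalization.liftAlgHom_apply, IsLocalization.lift_eq]
    rfl
  · rw [← hx₁]; ext a
    rw [AlgHom.comp_apply, AlgHom.comp_apply, AlgHom.comp_apply,
      IsScalarTower.toAlgHom_apply, hx',
      IsLocalization.liftAlgHom_apply, IsLocalization.lift_eq]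
    rfl
end
end

section
/- Let B be a commutative ring with finitely many maximal ideals 𝔪₁,…,𝔪_r. Then the ring B[t]_Σ is semilocal; more precisely, every maximal ideal of B[t]_Σ is the extension of one of the 2r maximal ideals 𝔪ᵢ·B[t] + t·B[t] or 𝔪ᵢ·B[t] + (t−1)·B[t] (1 ≤ i ≤ r) of B[t], and Σ is exactly the set of polynomials of B[t] lying in none of these ideals, so that B[t]_Σ is the semilocalization of B[t] at these maximal ideals. -/
noncomputable section

open Polynomial

/-!
STATEMENT 15: Let `B` be a commutative ring with finitely many maximal ideals
`𝔪₁,…,𝔪_r`.  Then `B[t]_Σ` is semilocal; more precisely, every maximal ideal of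
`B[t]_Σ` is the extension of one of the `2r` maximal ideals
`𝔪ᵢ·B[t] + t·B[t]` or `𝔪ᵢ·B[t] + (t−1)·B[t]` of `B[t]`, and `Σ` is exactly the set of
polynomials of `B[t]` lying in none of these ideals, so that `B[t]_Σ` is the
semilocalization of `B[t]` at these maximal ideals.
-/

/-- The ideal `𝔪·B[t] + (t − e)·B[t]` of `B[t]`. -/
def satIdeal (B : Type*) [CommRing B] (𝔪 : Ideal B) (e : B) : Ideal (Polynomial B) :=
  Ideal.map (Polynomial.C : B →+* Polynomial B) 𝔪 ⊔
    Ideal.span {Polynomial.X - Polynomial.C e}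

theorem satIdeal_eq_comap (B : Type*) [CommRing B] (𝔪 : Ideal B) (e : B) :
    satIdeal B 𝔪 e = Ideal.comap (evalRingHom e) 𝔪 := by
  apply le_antisymm
  · apply sup_le
    · rw [Ideal.map_le_iff_le_comap]
      intro x hx
      simpa [Ideal.mem_comap] using hx
    · rw [Ideal.span_le]
      rintro x hx
      simp only [Set.mem_singleton_iff] at hx
      subst hx
      simp [Ideal.mem_comap]
  · intro P hP
    simp only [Ideal.mem_comap, coe_evalRingHom] at hP
    have h1 : P = C (P.eval e) + (P - C (P.eval e)) := by ring
    rw [h1]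
    apply Ideal.add_mem
    · exact Ideal.mem_sup_left (Ideal.mem_map_of_mem _ hP)
    · exact Ideal.mem_sup_right (Ideal.mem_span_singleton.mpr (X_sub_C_dvd_sub_C_eval))

theorem mem_satIdeal {B : Type*} [CommRing B] {𝔪 : Ideal B} {e : B} {P : Polynomial B} :
    P ∈ satIdeal B 𝔪 e ↔ P.eval e ∈ 𝔪 := by
  rw [satIdeal_eq_comap]; rfl

theorem RLoc_is_semilocalization_at_the_four_corner_ideals
    (B : Type*) [CommRing B] [Finite (MaximalSpectrum B)] :
    -- the ideals `𝔪·B[t] + t·B[t]` and `𝔪·B[t] + (t−1)·B[t]` are maximal ideals of `B[t]`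
    (∀ (𝔪 : Ideal B), 𝔪.IsMaximal → ∀ e : B, (e = 0 ∨ e = 1) →
        (satIdeal B 𝔪 e).IsMaximal) ∧
    -- `Σ` consists exactly of the polynomials lying in none of these ideals
    (∀ P : Polynomial B, P ∈ RSigma B ↔
        ∀ (𝔪 : Ideal B), 𝔪.IsMaximal → ∀ e : B, (e = 0 ∨ e = 1) →
          P ∉ satIdeal B 𝔪 e) ∧
    -- every maximal ideal of `B[t]_Σ` is the extension of one of these ideals
    (∀ M : Ideal (RLoc B), M.IsMaximal →
        ∃ (𝔪 : Ideal B) (e : B), 𝔪.IsMaximal ∧ (e = 0 ∨ e = 1) ∧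
          M = Ideal.map (algebraMap (Polynomial B) (RLoc B)) (satIdeal B 𝔪 e)) ∧
    -- in particular `B[t]_Σ` is semilocal
    Finite (MaximalSpectrum (RLoc B)) := by
  have evalSurj : ∀ e : B, Function.Surjective (evalRingHom e : Polynomial B →+* B) :=
    fun e b => ⟨C b, eval_C⟩
  -- Part 1
  have part1 : ∀ (𝔪 : Ideal B), 𝔪.IsMaximal → ∀ e : B, (e = 0 ∨ e = 1) →
      (satIdeal B 𝔪 e).IsMaximal := by
    intro 𝔪 h𝔪 e _
    rw [satIdeal_eq_comap]
    exact Ideal.comap_isMaximal_of_surjective _ (evalSurj e) (H := h𝔪)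
  -- Part 2
  have part2 : ∀ P : Polynomial B, P ∈ RSigma B ↔
      ∀ (𝔪 : Ideal B), 𝔪.IsMaximal → ∀ e : B, (e = 0 ∨ e = 1) →
        P ∉ satIdeal B 𝔪 e := by
    intro P
    constructor
    · rintro ⟨h0, h1⟩ 𝔪 h𝔪 e he hmem
      rw [mem_satIdeal] at hmem
      rcases he with rfl | rfl
      · exact h𝔪.ne_top (Ideal.eq_top_of_isUnit_mem _ hmem h0)
      · exact h𝔪.ne_top (Ideal.eq_top_of_isUnit_mem _ hmem h1)
    · intro h
      have key : ∀ e : B, (e = 0 ∨ e = 1) → IsUnit (P.eval e) := by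
        intro e he
        by_contra hu
        obtain ⟨𝔪, h𝔪, hle⟩ := Ideal.exists_le_maximal (Ideal.span {P.eval e})
          (fun ht => hu (Ideal.span_singleton_eq_top.mp ht))
        exact h 𝔪 h𝔪 e he (mem_satIdeal.mpr (hle (Ideal.mem_span_singleton_self _)))
      exact ⟨key 0 (Or.inl rfl), key 1 (Or.inr rfl)⟩
  -- disjointness of satIdeal and Σ
  have disj : ∀ (𝔪 : Ideal B), 𝔪.IsMaximal → ∀ e : B, (e = 0 ∨ e = 1) →
      Disjoint ((RSigma B : Submonoid (Polynomial B)) : Set (Polynomial B))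
        ((satIdeal B 𝔪 e : Ideal (Polynomial B)) : Set (Polynomial B)) := by
    intro 𝔪 h𝔪 e he
    rw [Set.disjoint_left]
    intro P hP hP'
    exact (part2 P).mp hP 𝔪 h𝔪 e he hP'
  -- Part 3
  have part3 : ∀ M : Ideal (RLoc B), M.IsMaximal →
      ∃ (𝔪 : Ideal B) (e : B), 𝔪.IsMaximal ∧ (e = 0 ∨ e = 1) ∧
        M = Ideal.map (algebraMap (Polynomial B) (RLoc B)) (satIdeal B 𝔪 e) := by
    intro M hM
    set 𝔭 := Ideal.comap (algebraMap (Polynomial B) (RLoc B)) M with h𝔭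
    have hMap : Ideal.map (algebraMap (Polynomial B) (RLoc B)) 𝔭 = M :=
      IsLocalization.map_comap (RSigma B) (RLoc B) M
    -- 𝔭 is disjoint from Σ
    have hdisj : ∀ P ∈ RSigma B, P ∉ 𝔭 := by
      intro P hP hP𝔭
      have : IsUnit (algebraMap (Polynomial B) (RLoc B) P) :=
        IsLocalization.map_units (RLoc B) ⟨P, hP⟩
      exact hM.ne_top (Ideal.eq_top_of_isUnit_mem _ hP𝔭 this)
    -- find e and 𝔪
    have key : ∃ e : B, (e = 0 ∨ e = 1) ∧ Ideal.map (evalRingHom e) 𝔭 ≠ ⊤ := by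
      by_contra hcon
      push_neg at hcon
      have h0 := hcon 0 (Or.inl rfl)
      have h1 := hcon 1 (Or.inr rfl)
      obtain ⟨p0, hp0, hp0e⟩ := (Ideal.mem_map_iff_of_surjective _ (evalSurj 0)).mp
        (h0 ▸ Submodule.mem_top : (1 : B) ∈ Ideal.map (evalRingHom 0) 𝔭)
      obtain ⟨p1, hp1, hp1e⟩ := (Ideal.mem_map_iff_of_surjective _ (evalSurj 1)).mp
        (h1 ▸ Submodule.mem_top : (1 : B) ∈ Ideal.map (evalRingHom 1) 𝔭)
      set q := p0 + p1 - p0 * p1 with hq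
      have hq𝔭 : q ∈ 𝔭 := by
        apply Ideal.sub_mem
        · exact Ideal.add_mem _ hp0 hp1
        · exact Ideal.mul_mem_right _ _ hp0
      have hq0 : q.eval 0 = 1 := by
        simp only [hq, eval_sub, eval_add, eval_mul]
        simp only [coe_evalRingHom] at hp0e
        rw [hp0e]; ring
      have hq1 : q.eval 1 = 1 := by
        simp only [hq, eval_sub, eval_add, eval_mul]
        simp only [coe_evalRingHom] at hp1e
        rw [hp1e]; ring
      exact hdisj q ⟨by rw [hq0]; exact isUnit_one, by rw [hq1]; exact isUnit_one⟩ hq𝔭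
    obtain ⟨e, he, hne⟩ := key
    obtain ⟨𝔪, h𝔪, hle⟩ := Ideal.exists_le_maximal _ hne
    have h𝔭le : 𝔭 ≤ satIdeal B 𝔪 e := by
      intro P hP
      rw [mem_satIdeal]
      exact hle (Ideal.mem_map_of_mem _ hP)
    refine ⟨𝔪, e, h𝔪, he, ?_⟩
    have hprime : (Ideal.map (algebraMap (Polynomial B) (RLoc B)) (satIdeal B 𝔪 e)).IsPrime :=
      IsLocalization.isPrime_of_isPrime_disjoint (RSigma B) (RLoc B) _
        (part1 𝔪 h𝔪 e he).isPrime (disj 𝔪 h𝔪 e he)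
    have hsub : M ≤ Ideal.map (algebraMap (Polynomial B) (RLoc B)) (satIdeal B 𝔪 e) := by
      rw [← hMap]
      exact Ideal.map_mono h𝔭le
    exact hM.eq_of_le hprime.ne_top hsub
  refine ⟨part1, part2, part3, ?_⟩
  -- finiteness
  have hchoice : ∀ M : MaximalSpectrum (RLoc B), ∃ p : MaximalSpectrum B × Bool,
      M.asIdeal = Ideal.map (algebraMap (Polynomial B) (RLoc B))
        (satIdeal B p.1.asIdeal (if p.2 then 1 else 0)) := by
    intro M
    obtain ⟨𝔪, e, h𝔪, he, hM⟩ := part3 M.asIdeal M.isMaximal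
    rcases he with rfl | rfl
    · exact ⟨⟨⟨𝔪, h𝔪⟩, false⟩, by simpa using hM⟩
    · exact ⟨⟨⟨𝔪, h𝔪⟩, true⟩, by simpa using hM⟩
  choose g hg using hchoice
  exact Finite.of_injective g fun M N h =>
    MaximalSpectrum.ext (by rw [hg M, hg N, h])
end
end

section
/- Let B be a semilocal commutative ring. Let (U, x) be a pointed B-scheme (U a scheme over Spec B with a point x ∈ U(B)) which is a pointed B-retract of a pointed open subscheme (V, 0) of (A^N_B, 0), where 0 denotes the zero section of affine N-space over B: there exist B-morphisms i : U → V and r : V → U with r ∘ i = id_U, i ∘ x = 0 and r ∘ 0 = x. Then there exist an affine open subscheme U′ of U through which x factors, an integer N′, an affine open subscheme V′ of A^{N′}_B through which the zero section factors, and pointed B-morphisms i′ : U′ → V′ and r′ : V′ → U′ with r′ ∘ i′ = id_{U′}, i′ carrying x to the zero point and r′ carrying the zero point to x; that is, (U′, x) is a pointed B-retract of an affine open subscheme (V′, 0) of some (A^{N′}_B, 0). -/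
noncomputable section

open AlgebraicGeometry CategoryTheory

universe u

/-- Affine `N`-space over `B`. -/
abbrev AffineSpaceB (B : Type u) [CommRing B] (N : ℕ) : Scheme.{u} :=
  Spec (CommRingCat.of (MvPolynomial (Fin N) B))

/-- The structure morphism of affine `N`-space over `B`. -/
noncomputable abbrev affineSpaceStruct (B : Type u) [CommRing B] (N : ℕ) :
    AffineSpaceB B N ⟶ Spec (CommRingCat.of B) :=
  Spec.map (CommRingCat.ofHom (algebraMap B (MvPolynomial (Fin N) B)))

/-- The zero section of affine `N`-space over `B`, given by the `B`-algebra
homomorphism `B[x₁,…,x_N] → B` sending each variable to `0`. -/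
noncomputable abbrev zeroSection (B : Type u) [CommRing B] (N : ℕ) :
    Spec (CommRingCat.of B) ⟶ AffineSpaceB B N :=
  Spec.map (CommRingCat.ofHom
    ((MvPolynomial.aeval (fun _ : Fin N => (0 : B))).toRingHom))

theorem AlgebraicGeometry.Scheme.comp_base_apply {X Y Z : Scheme.{u}} (f : X ⟶ Y) (g : Y ⟶ Z)
    (x : X) : (f ≫ g).base x = g.base (f.base x) := rfl

/-!
STATEMENT 16: Let `B` be a semilocal commutative ring and `(U, x)` a pointed
`B`-scheme which is a pointed `B`-retract of a pointed open subscheme `(V, 0)` of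
`(A^N_B, 0)`.  Then there are an affine open `U′ ⊆ U` through which `x` factors, an
`N′`, an affine open `V′ ⊆ A^{N′}_B` through which the zero section factors, and
pointed `B`-morphisms `i′ : U′ → V′`, `r′ : V′ → U′` with `r′ ∘ i′ = id`, exhibiting
`(U′, x)` as a pointed `B`-retract of the pointed affine open `(V′, 0)`.
-/

theorem pointed_retract_refines_to_affine_opens
    (B : Type u) [CommRing B] [Finite (MaximalSpectrum B)]
    -- the pointed `B`-scheme `(U, x)`
    (U : Scheme.{u}) (p : U ⟶ Spec (CommRingCat.of B))
    (x : Spec (CommRingCat.of B) ⟶ U) (hx : x ≫ p = 𝟙 (Spec (CommRingCat.of B)))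
    -- the pointed open subscheme `(V, 0)` of `(A^N_B, 0)`
    (N : ℕ) (V : (AffineSpaceB B N).Opens)
    (zV : Spec (CommRingCat.of B) ⟶ (V : Scheme.{u}))
    (hzV : zV ≫ V.ι = zeroSection B N)
    -- the pointed retraction data, over `Spec B`
    (i : U ⟶ (V : Scheme.{u})) (r : (V : Scheme.{u}) ⟶ U)
    (hi : i ≫ V.ι ≫ affineSpaceStruct B N = p)
    (hr : r ≫ p = V.ι ≫ affineSpaceStruct B N)
    (hri : i ≫ r = 𝟙 U) (hix : x ≫ i = zV) (hrz : zV ≫ r = x) :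
    ∃ (U' : U.Opens), IsAffine (U' : Scheme.{u}) ∧
      ∃ (xU' : Spec (CommRingCat.of B) ⟶ (U' : Scheme.{u})), xU' ≫ U'.ι = x ∧
        ∃ (N' : ℕ) (V' : (AffineSpaceB B N').Opens), IsAffine (V' : Scheme.{u}) ∧
          ∃ (zV' : Spec (CommRingCat.of B) ⟶ (V' : Scheme.{u})),
            zV' ≫ V'.ι = zeroSection B N' ∧
            ∃ (i' : (U' : Scheme.{u}) ⟶ (V' : Scheme.{u}))
              (r' : (V' : Scheme.{u}) ⟶ (U' : Scheme.{u})),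
              -- `i′` and `r′` are `B`-morphisms
              i' ≫ V'.ι ≫ affineSpaceStruct B N' = U'.ι ≫ p ∧
              r' ≫ U'.ι ≫ p = V'.ι ≫ affineSpaceStruct B N' ∧
              -- `(U′, x)` is a pointed retract of `(V′, 0)`
              i' ≫ r' = 𝟙 (U' : Scheme.{u}) ∧
              xU' ≫ i' = zV' ∧ zV' ≫ r' = xU' := by
  classical
  -- Step 1: `i` is a closed immersion
  have hrsep : IsSeparated r := by
    have h1 : IsSeparated (V.ι ≫ affineSpaceStruct B N) := inferInstance
    rw [← hr] at h1
    exact IsSeparated.of_comp r p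
  have hiCl : IsClosedImmersion i := by
    have h1 : IsClosedImmersion (i ≫ r) := hri ▸ inferInstance
    exact IsClosedImmersion.of_comp i r
  -- the zero section as a map to affine space
  set z : Spec (CommRingCat.of B) ⟶ AffineSpaceB B N := zV ≫ V.ι with hzdef
  have hz_mem_V : ∀ q, z.base q ∈ V := by
    intro q
    have : z.base q = V.ι.base (zV.base q) := by
      rw [hzdef]; simp [Scheme.comp_base_apply]
    rw [this]
    have h2 : V.ι.base (zV.base q) ∈ Set.range V.ι.base := Set.mem_range_self _
    rwa [V.range_ι] at h2
  -- Step 2: prime avoidance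
  set R := MvPolynomial (Fin N) B with hR
  let Vs : Set (PrimeSpectrum R) :=
    show Set ((AffineSpaceB B N) : Scheme.{u}).carrier from (V : Set _)
  let I : Ideal R := PrimeSpectrum.vanishingIdeal Vsᶜ
  have hIV : ∀ t : PrimeSpectrum R, t ∈ Vs → ¬ (I ≤ t.asIdeal) := by
    intro t ht hle
    have h1 : t ∈ PrimeSpectrum.zeroLocus (I : Set R) :=
      (PrimeSpectrum.mem_zeroLocus _ _).mpr hle
    rw [PrimeSpectrum.zeroLocus_vanishingIdeal_eq_closure] at h1
    have h2 : closure Vsᶜ = Vsᶜ := by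
      apply IsClosed.closure_eq
      exact (V.2 : IsOpen Vs).isClosed_compl
    rw [h2] at h1
    exact h1 ht
  have hDV : ∀ g : R, g ∈ I → (PrimeSpectrum.basicOpen g : Set (PrimeSpectrum R)) ⊆ Vs := by
    intro g hg t ht
    by_contra htV
    have h1 : t ∈ closure Vsᶜ := subset_closure htV
    rw [← PrimeSpectrum.zeroLocus_vanishingIdeal_eq_closure] at h1
    exact (PrimeSpectrum.mem_basicOpen g t).mp ht ((PrimeSpectrum.mem_zeroLocus _ _).mp h1 hg)
  -- the images of the closed points of `Spec B`
  let pt : MaximalSpectrum B → PrimeSpectrum R :=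
    fun m => z.base (show (Spec (CommRingCat.of B)).carrier from m.toPrimeSpectrum)
  obtain ⟨g, hgI, hgpt⟩ : ∃ g : R, g ∈ I ∧ ∀ m : MaximalSpectrum B, g ∉ (pt m).asIdeal := by
    have _inst := Fintype.ofFinite (MaximalSpectrum B)
    let f : Option (Option (MaximalSpectrum B)) → Ideal R :=
      fun o => o.elim ⊥ (fun o' => o'.elim ⊥ (fun m => (pt m).asIdeal))
    have hp : ∀ o ∈ (Finset.univ.image (fun m => some (some m))),
        o ≠ none → o ≠ some none → (f o).IsPrime := by
      intro o ho _ _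
      simp only [Finset.mem_image] at ho
      obtain ⟨m, -, rfl⟩ := ho
      exact (pt m).isPrime
    have hiff := Ideal.subset_union_prime (f := f)
      (s := Finset.univ.image (fun m => some (some m))) none (some none) hp (I := I)
    have hnot : ¬ ∃ o ∈ (Finset.univ.image (fun m : MaximalSpectrum B => some (some m))),
        I ≤ f o := by
      rintro ⟨o, ho, hle⟩
      simp only [Finset.mem_image] at ho
      obtain ⟨m, -, rfl⟩ := ho
      exact hIV (pt m) (hz_mem_V _) hle
    rw [← hiff] at hnot
    obtain ⟨g, hgI, hgU⟩ := Set.not_subset.mp hnot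
    refine ⟨g, hgI, fun m hm => hgU ?_⟩
    simp only [Set.mem_iUnion]
    exact ⟨some (some m), by simp, hm⟩
  -- every point of the zero section lands in `D(g)`
  have hz_mem_D : ∀ q, z.base q ∈ PrimeSpectrum.basicOpen g := by
    intro q
    obtain ⟨M, hM, hqM⟩ := Ideal.exists_le_maximal
      (PrimeSpectrum.asIdeal (show PrimeSpectrum B from q))
      (Ideal.IsPrime.ne_top (PrimeSpectrum.isPrime (show PrimeSpectrum B from q)))
    have hspec : (show PrimeSpectrum B from q) ⤳ (⟨M, hM⟩ : MaximalSpectrum B).toPrimeSpectrum :=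
      (PrimeSpectrum.le_iff_specializes _ _).mp hqM
    have hspec2 : z.base q ⤳ pt ⟨M, hM⟩ := hspec.map z.base.hom.2
    exact hspec2.mem_open (PrimeSpectrum.basicOpen g).2
      ((PrimeSpectrum.mem_basicOpen g _).mpr (hgpt ⟨M, hM⟩))
  -- Step 3: construct the affine opens and the maps
  set Wo : (AffineSpaceB B N).Opens := PrimeSpectrum.basicOpen g with hWodef
  have hWoAff : IsAffineOpen Wo := IsAffineOpen.Spec_basicOpen (R := CommRingCat.of (MvPolynomial (Fin N) B)) g
  have hWo_le_V : Wo ≤ V := by intro t ht; exact hDV g hgI ht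
  have _inst1 : IsAffine (Wo : Scheme.{u}) := hWoAff
  set nu : (Wo : Scheme.{u}) ⟶ (V : Scheme.{u}) := (AffineSpaceB B N).homOfLE hWo_le_V with hnudef
  set h : (Wo : Scheme.{u}) ⟶ AffineSpaceB B N := nu ≫ r ≫ i ≫ V.ι with hhdef
  set P : (Wo : Scheme.{u}).Opens := h ⁻¹ᵁ Wo with hPdef
  have hPAff : IsAffineOpen P := by
    have e0 : Wo = (AffineSpaceB B N).basicOpen
        ((Scheme.ΓSpecIso (CommRingCat.of (MvPolynomial (Fin N) B))).inv g) := by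
      rw [hWodef]
      exact (basicOpen_eq_of_affine
        (R := CommRingCat.of (MvPolynomial (Fin N) B)) g).symm
    have e1 : P = (Wo : Scheme.{u}).basicOpen
        (h.appTop ((Scheme.ΓSpecIso (CommRingCat.of (MvPolynomial (Fin N) B))).inv g)) :=
      hPdef.trans ((congrArg (fun O => h ⁻¹ᵁ O) e0).trans
        (Scheme.preimage_basicOpen_top h _))
    rw [e1]
    exact (isAffineOpen_top (Wo : Scheme.{u})).basicOpen _
  set V' : (AffineSpaceB B N).Opens := Wo.ι ''ᵁ P with hV'def
  have hV'Aff : IsAffineOpen V' := hPAff.image_of_isOpenImmersion Wo.ι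
  have hV'_le_Wo : V' ≤ Wo := Wo.ι_image_le P
  have hV'_le_V : V' ≤ V := le_trans hV'_le_Wo hWo_le_V
  -- the zero section factors through Wo
  have hzWrange : Set.range z.base ⊆ Set.range Wo.ι.base := by
    rw [Wo.range_ι]; rintro t ⟨q, rfl⟩; exact hz_mem_D q
  set zW : Spec (CommRingCat.of B) ⟶ (Wo : Scheme.{u}) :=
    IsOpenImmersion.lift Wo.ι z hzWrange with hzWdef
  have hzW : zW ≫ Wo.ι = z := IsOpenImmersion.lift_fac _ _ _
  have hzWnu : zW ≫ nu = zV := by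
    rw [← cancel_mono V.ι, Category.assoc, hnudef, Scheme.homOfLE_ι, hzW, hzdef]
  have hzWh : zW ≫ h = z := by
    rw [hhdef, ← Category.assoc, hzWnu, hzdef, ← Category.assoc, hrz, ← Category.assoc, hix]
  have hz_mem_V' : ∀ q, z.base q ∈ V' := by
    intro q
    refine ⟨zW.base q, ?_, ?_⟩
    · show h.base (zW.base q) ∈ Wo
      rw [← Scheme.comp_base_apply, hzWh]; exact hz_mem_D q
    · show Wo.ι.base (zW.base q) = z.base q
      rw [← Scheme.comp_base_apply, hzW]
  -- U' and its affineness
  set T : (V : Scheme.{u}).Opens := V.ι ⁻¹ᵁ V' with hTdef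
  set U' : U.Opens := i ⁻¹ᵁ T with hU'def
  have hTAff : IsAffineOpen T := by
    apply (V.ι.isAffineOpen_iff_of_isOpenImmersion (U := T)).mp
    have e2 : V.ι ''ᵁ T = V' := by
      rw [hTdef, Scheme.Hom.image_preimage_eq_opensRange_inf, V.opensRange_ι]
      exact inf_eq_right.mpr hV'_le_V
    rw [e2]; exact hV'Aff
  have _instT : IsAffine (T : Scheme.{u}) := hTAff
  have _instCl : IsClosedImmersion (i ∣_ T) := IsZariskiLocalAtTarget.restrict hiCl T
  have hU'Aff : IsAffine (U' : Scheme.{u}) := isAffine_of_isAffineHom (i ∣_ T)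
  -- the key stability computation
  set nu' : (V' : Scheme.{u}) ⟶ (V : Scheme.{u}) := (AffineSpaceB B N).homOfLE hV'_le_V with hnu'def
  set hres : (P : Scheme.{u}) ⟶ (Wo : Scheme.{u}) := h.resLE Wo P le_rfl with hresdef
  have hres_i : hres ≫ Wo.ι = P.ι ≫ h := Scheme.Hom.resLE_comp_ι _ _
  have e3 : nu ≫ V.ι = Wo.ι := by rw [hnudef]; exact Scheme.homOfLE_ι _ _
  have hres_nu : hres ≫ nu = P.ι ≫ nu ≫ r ≫ i := by
    rw [← cancel_mono V.ι, Category.assoc, e3, hres_i, hhdef]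
    simp only [Category.assoc, e3]
  have hri' := reassoc_of% hri
  have hresh : hres ≫ h = P.ι ≫ h := by
    rw [hhdef, ← Category.assoc, hres_nu]
    simp only [Category.assoc]
    rw [hri']
  have hPh_mem : ∀ w, (P.ι ≫ h).base w ∈ V' := by
    intro w
    refine ⟨hres.base w, ?_, ?_⟩
    · show h.base (hres.base w) ∈ Wo
      rw [← Scheme.comp_base_apply, hresh, Scheme.comp_base_apply]
      have h3 : P.ι.base w ∈ Set.range P.ι.base := Set.mem_range_self w
      rw [P.range_ι] at h3
      exact h3
    · show Wo.ι.base (hres.base w) = (P.ι ≫ h).base w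
      rw [← Scheme.comp_base_apply, hres_i]
  set κ : (V' : Scheme.{u}) ⟶ (Wo : Scheme.{u}) :=
    (AffineSpaceB B N).homOfLE hV'_le_Wo with hκdef
  have hκι : κ ≫ Wo.ι = V'.ι := by rw [hκdef]; exact Scheme.homOfLE_ι _ _
  have hκnu : κ ≫ nu = nu' := by
    rw [hκdef, hnudef, hnu'def]; exact Scheme.homOfLE_homOfLE _ _ _
  have hrho : nu' ≫ r ≫ i ≫ V.ι = κ ≫ h := by
    rw [← hκnu, hhdef, Category.assoc]
  have hrho_mem : ∀ v', ((nu' ≫ r ≫ i ≫ V.ι).base v') ∈ V' := by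
    intro v'
    rw [hrho, Scheme.comp_base_apply]
    have ht : V'.ι.base v' ∈ V' := by
      have h3 : V'.ι.base v' ∈ Set.range V'.ι.base := Set.mem_range_self v'
      rwa [V'.range_ι] at h3
    obtain ⟨w0, hw0P, hw0⟩ := ht
    obtain ⟨w, rfl⟩ : ∃ w, P.ι.base w = w0 := by
      have h4 : w0 ∈ Set.range P.ι.base := by rw [P.range_ι]; exact hw0P
      exact h4
    have hκv : κ.base v' = P.ι.base w := by
      apply Wo.ι.isOpenEmbedding.injective
      rw [← Scheme.comp_base_apply, hκι]
      exact hw0.symm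
    rw [hκv, ← Scheme.comp_base_apply]
    exact hPh_mem w
  -- memberships for the liftings
  have hx_mem_U' : ∀ q, x.base q ∈ U' := by
    intro q
    show V.ι.base (i.base (x.base q)) ∈ V'
    rw [← Scheme.comp_base_apply, ← Scheme.comp_base_apply, reassoc_of% hix, ← hzdef]
    exact hz_mem_V' q
  -- the four morphisms
  have hxrange : Set.range x.base ⊆ Set.range U'.ι.base := by
    rw [U'.range_ι]; rintro t ⟨q, rfl⟩; exact hx_mem_U' q
  set xU' : Spec (CommRingCat.of B) ⟶ (U' : Scheme.{u}) :=
    IsOpenImmersion.lift U'.ι x hxrange with hxU'def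
  have hxU'fac : xU' ≫ U'.ι = x := IsOpenImmersion.lift_fac _ _ _
  have hzrange : Set.range z.base ⊆ Set.range V'.ι.base := by
    rw [V'.range_ι]; rintro t ⟨q, rfl⟩; exact hz_mem_V' q
  set zV' : Spec (CommRingCat.of B) ⟶ (V' : Scheme.{u}) :=
    IsOpenImmersion.lift V'.ι z hzrange with hzV'def
  have hzV'fac : zV' ≫ V'.ι = z := IsOpenImmersion.lift_fac _ _ _
  have hirange : Set.range (U'.ι ≫ i ≫ V.ι).base ⊆ Set.range V'.ι.base := by
    rw [V'.range_ι]
    rintro t ⟨u', rfl⟩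
    rw [Scheme.comp_base_apply]
    have h3 : U'.ι.base u' ∈ Set.range U'.ι.base := Set.mem_range_self u'
    rw [U'.range_ι] at h3
    exact h3
  set i' : (U' : Scheme.{u}) ⟶ (V' : Scheme.{u}) :=
    IsOpenImmersion.lift V'.ι (U'.ι ≫ i ≫ V.ι) hirange with hi'def
  have hi'fac : i' ≫ V'.ι = U'.ι ≫ i ≫ V.ι := IsOpenImmersion.lift_fac _ _ _
  have hrrange : Set.range (nu' ≫ r).base ⊆ Set.range U'.ι.base := by
    rw [U'.range_ι]
    rintro t ⟨v', rfl⟩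
    show V.ι.base (i.base ((nu' ≫ r).base v')) ∈ V'
    rw [Scheme.comp_base_apply, ← Scheme.comp_base_apply, ← Scheme.comp_base_apply]
    have h5 := hrho_mem v'
    simp only [Category.assoc] at h5 ⊢
    exact h5
  set r' : (V' : Scheme.{u}) ⟶ (U' : Scheme.{u}) :=
    IsOpenImmersion.lift U'.ι (nu' ≫ r) hrrange with hr'def
  have hr'fac : r' ≫ U'.ι = nu' ≫ r := IsOpenImmersion.lift_fac _ _ _
  -- assemble
  have e4 : nu' ≫ V.ι = V'.ι := by rw [hnu'def]; exact Scheme.homOfLE_ι _ _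
  refine ⟨U', hU'Aff, xU', hxU'fac, N, V', hV'Aff, zV', ?_, i', r', ?_, ?_, ?_, ?_, ?_⟩
  · rw [hzV'fac]; exact hzV
  · rw [← Category.assoc, hi'fac]
    simp only [Category.assoc]
    rw [hi]
  · rw [← Category.assoc, hr'fac, Category.assoc, hr, ← Category.assoc, e4]
  · rw [← cancel_mono U'.ι, Category.assoc, hr'fac, Category.id_comp]
    have h6 : i' ≫ nu' = U'.ι ≫ i := by
      rw [← cancel_mono V.ι, Category.assoc, e4, hi'fac, Category.assoc]
    rw [← Category.assoc, h6, Category.assoc, hri, Category.comp_id]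
  · rw [← cancel_mono V'.ι, Category.assoc, hi'fac, hzV'fac, ← Category.assoc, hxU'fac,
      hzdef, ← Category.assoc, hix]
  · rw [← cancel_mono U'.ι, Category.assoc, hr'fac, hxU'fac]
    have h7 : zV' ≫ nu' = zV := by
      rw [← cancel_mono V.ι, Category.assoc, e4, hzV'fac, hzdef]
    rw [← Category.assoc, h7, hrz]
end
end

section
/- Let B be a semilocal commutative ring, let N ≥ 0, let V be an open subscheme of the affine space A^N_B, and let U be a scheme over Spec B which is a B-retract of V: there exist B-morphisms i : U → V and r : V → U with r ∘ i = id_U. Then any two elements of U(B) are R-equivalent; in particular, if U(B) is nonempty then U(B)/R is a singleton. -/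
noncomputable section

open Polynomial

open AlgebraicGeometry CategoryTheory

universe u

/-- Direct R-equivalence of two `B`-points of a `B`-scheme `U` (with structure
morphism `p`): they are the two evaluations of a point of `U(B[t]_Σ)` over `Spec B`. -/
def SchemeDirectR (B : Type u) [CommRing B] (U : Scheme.{u})
    (p : U ⟶ Spec (CommRingCat.of B))
    (y₀ y₁ : Spec (CommRingCat.of B) ⟶ U) : Prop :=
  ∃ y : Spec (CommRingCat.of (RLoc B)) ⟶ U,
    y ≫ p = Spec.map (CommRingCat.ofHom (algebraMap B (RLoc B))) ∧
    Spec.map (CommRingCat.ofHom (ev0 B).toRingHom) ≫ y = y₀ ∧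
    Spec.map (CommRingCat.ofHom (ev1 B).toRingHom) ≫ y = y₁

section AuxAlg
variable {B : Type*} [CommRing B]

lemma ev0_algebraMap_poly (P : Polynomial B) :
    ev0 B (algebraMap (Polynomial B) (RLoc B) P) = P.eval 0 := by
  rw [ev0, IsLocalization.liftAlgHom_apply, IsLocalization.lift_eq]
  rw [← Polynomial.coe_aeval_eq_eval]; rfl

lemma ev1_algebraMap_poly (P : Polynomial B) :
    ev1 B (algebraMap (Polynomial B) (RLoc B) P) = P.eval 1 := by
  rw [ev1, IsLocalization.liftAlgHom_apply, IsLocalization.lift_eq]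
  rw [← Polynomial.coe_aeval_eq_eval]; rfl

lemma isUnit_of_ev_isUnit {x : RLoc B} (h0 : IsUnit (ev0 B x)) (h1 : IsUnit (ev1 B x)) :
    IsUnit x := by
  obtain ⟨⟨p, s⟩, rfl⟩ := IsLocalization.mk'_surjective (RSigma B) x
  have key : IsLocalization.mk' (RLoc B) p s * algebraMap (Polynomial B) (RLoc B) (s : Polynomial B)
      = algebraMap (Polynomial B) (RLoc B) p := IsLocalization.mk'_spec _ p s
  have h0' : IsUnit (p.eval 0) := by
    have := congrArg (ev0 B) key
    rw [map_mul, ev0_algebraMap_poly, ev0_algebraMap_poly] at this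
    exact this ▸ h0.mul (mem_RSigma.mp s.2).1
  have h1' : IsUnit (p.eval 1) := by
    have := congrArg (ev1 B) key
    rw [map_mul, ev1_algebraMap_poly, ev1_algebraMap_poly] at this
    exact this ▸ h1.mul (mem_RSigma.mp s.2).2
  have hp : IsUnit (algebraMap (Polynomial B) (RLoc B) p) :=
    IsLocalization.map_units (RLoc B) (⟨p, h0', h1'⟩ : RSigma B)
  exact isUnit_of_mul_isUnit_left (key ▸ hp)

end AuxAlg

lemma schemeDirectR_of_retract (B : Type u) [CommRing B] (N : ℕ)
    (V : (AffineSpaceB B N).Opens)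
    (U : Scheme.{u}) (p : U ⟶ Spec (CommRingCat.of B))
    (i : U ⟶ (V : Scheme.{u})) (r : (V : Scheme.{u}) ⟶ U)
    (hi : i ≫ V.ι ≫ affineSpaceStruct B N = p)
    (hr : r ≫ p = V.ι ≫ affineSpaceStruct B N)
    (hri : i ≫ r = 𝟙 U)
    (y₀ y₁ : Spec (CommRingCat.of B) ⟶ U)
    (h₀ : y₀ ≫ p = 𝟙 _) (h₁ : y₁ ≫ p = 𝟙 _) :
    SchemeDirectR B U p y₀ y₁ := by
  classical
  let φ₀ : CommRingCat.of (MvPolynomial (Fin N) B) ⟶ CommRingCat.of B :=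
    Spec.preimage (y₀ ≫ i ≫ V.ι)
  let φ₁ : CommRingCat.of (MvPolynomial (Fin N) B) ⟶ CommRingCat.of B :=
    Spec.preimage (y₁ ≫ i ≫ V.ι)
  have hφ₀ : Spec.map φ₀ = y₀ ≫ i ≫ V.ι := Spec.map_preimage _
  have hφ₁ : Spec.map φ₁ = y₁ ≫ i ≫ V.ι := Spec.map_preimage _
  have hφ₀alg : (φ₀.hom : MvPolynomial (Fin N) B →+* B).comp
      (algebraMap B (MvPolynomial (Fin N) B)) = RingHom.id B := by
    have : Spec.map (CommRingCat.ofHom (algebraMap B (MvPolynomial (Fin N) B)) ≫ φ₀) =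
        Spec.map (𝟙 (CommRingCat.of B)) := by
      rw [Spec.map_comp, hφ₀, Spec.map_id]
      simp only [Category.assoc]
      rw [hi, h₀]
    exact congrArg CommRingCat.Hom.hom (Spec.map_injective this)
  have hφ₁alg : (φ₁.hom : MvPolynomial (Fin N) B →+* B).comp
      (algebraMap B (MvPolynomial (Fin N) B)) = RingHom.id B := by
    have : Spec.map (CommRingCat.ofHom (algebraMap B (MvPolynomial (Fin N) B)) ≫ φ₁) =
        Spec.map (𝟙 (CommRingCat.of B)) := by
      rw [Spec.map_comp, hφ₁, Spec.map_id]
      simp only [Category.assoc]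
      rw [hi, h₁]
    exact congrArg CommRingCat.Hom.hom (Spec.map_injective this)
  -- the line through the two points, as an algebra map into `RLoc B`
  set T : RLoc B := algebraMap (Polynomial B) (RLoc B) Polynomial.X with hT
  set ψa : MvPolynomial (Fin N) B →ₐ[B] RLoc B :=
    MvPolynomial.aeval (fun k => algebraMap B (RLoc B) (φ₀ (MvPolynomial.X k)) * (1 - T) +
      algebraMap B (RLoc B) (φ₁ (MvPolynomial.X k)) * T) with hψa
  have hev0T : ev0 B T = 0 := by rw [hT, ev0_algebraMap_poly]; simp
  have hev1T : ev1 B T = 1 := by rw [hT, ev1_algebraMap_poly]; simp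
  have hev0ψ : (ev0 B).toRingHom.comp ψa.toRingHom =
      (φ₀.hom : MvPolynomial (Fin N) B →+* B) := by
    apply MvPolynomial.ringHom_ext
    · intro b
      have h1 : ψa (MvPolynomial.C b) = algebraMap B (RLoc B) b := by
        rw [← MvPolynomial.algebraMap_eq]; exact ψa.commutes b
      have h2 : (φ₀.hom : MvPolynomial (Fin N) B →+* B) (MvPolynomial.C b) = b := by
        rw [← MvPolynomial.algebraMap_eq]; exact RingHom.congr_fun hφ₀alg b
      simp only [RingHom.comp_apply, AlgHom.toRingHom_eq_coe, RingHom.coe_coe, h1, h2]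
      exact (ev0 B).commutes b
    · intro k
      simp only [RingHom.comp_apply, AlgHom.toRingHom_eq_coe, RingHom.coe_coe, hψa,
        MvPolynomial.aeval_X, map_add, map_mul, map_sub, map_one, AlgHom.commutes, hev0T, Algebra.algebraMap_self, RingHom.id_apply]
      ring
  have hev1ψ : (ev1 B).toRingHom.comp ψa.toRingHom =
      (φ₁.hom : MvPolynomial (Fin N) B →+* B) := by
    apply MvPolynomial.ringHom_ext
    · intro b
      have h1 : ψa (MvPolynomial.C b) = algebraMap B (RLoc B) b := by
        rw [← MvPolynomial.algebraMap_eq]; exact ψa.commutes b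
      have h2 : (φ₁.hom : MvPolynomial (Fin N) B →+* B) (MvPolynomial.C b) = b := by
        rw [← MvPolynomial.algebraMap_eq]; exact RingHom.congr_fun hφ₁alg b
      simp only [RingHom.comp_apply, AlgHom.toRingHom_eq_coe, RingHom.coe_coe, h1, h2]
      exact (ev1 B).commutes b
    · intro k
      simp only [RingHom.comp_apply, AlgHom.toRingHom_eq_coe, RingHom.coe_coe, hψa,
        MvPolynomial.aeval_X, map_add, map_mul, map_sub, map_one, AlgHom.commutes, hev1T, Algebra.algebraMap_self, RingHom.id_apply]
      ring
  -- the closed complement of `V`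
  obtain ⟨I, hI⟩ :=
    (PrimeSpectrum.isClosed_iff_zeroLocus_ideal ((V : Set (AffineSpaceB B N))ᶜ)).mp
      V.2.isClosed_compl
  -- the two endpoints land in `V`
  have hr0 : ∀ q : PrimeSpectrum B, (Spec.map φ₀).base q ∈
      (V : Set (AffineSpaceB B N)) := by
    intro q
    have e : (Spec.map φ₀).base q = V.ι.base ((y₀ ≫ i).base q) := by
      rw [hφ₀, ← Category.assoc]; rfl
    rw [e, ← Scheme.Opens.range_ι (U := V)]
    exact Set.mem_range_self _
  have hr1 : ∀ q : PrimeSpectrum B, (Spec.map φ₁).base q ∈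
      (V : Set (AffineSpaceB B N)) := by
    intro q
    have e : (Spec.map φ₁).base q = V.ι.base ((y₁ ≫ i).base q) := by
      rw [hφ₁, ← Category.assoc]; rfl
    rw [e, ← Scheme.Opens.range_ι (U := V)]
    exact Set.mem_range_self _
  -- hence `I` maps onto the unit ideal under `φ₀`, `φ₁`
  have htop : ∀ (φ : CommRingCat.of (MvPolynomial (Fin N) B) ⟶ CommRingCat.of B),
      (∀ q : PrimeSpectrum B, (Spec.map φ).base q ∈
        (V : Set (AffineSpaceB B N))) →
      Ideal.map (φ.hom : MvPolynomial (Fin N) B →+* B) I = ⊤ := by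
    intro φ hrφ
    by_contra hne
    obtain ⟨m, hm, hle⟩ := Ideal.exists_le_maximal _ hne
    have h1 := hrφ ⟨m, hm.isPrime⟩
    have h2 : (Spec.map φ).base ⟨m, hm.isPrime⟩ ∈ ((V : Set (AffineSpaceB B N)))ᶜ := by
      refine (Set.ext_iff.mp hI _).mpr ?_
      refine (PrimeSpectrum.mem_zeroLocus _ _).mpr ?_
      intro x hx
      exact hle (Ideal.mem_map_of_mem _ hx)
    exact h2 h1
  have hsurj₀ : Function.Surjective (φ₀.hom : MvPolynomial (Fin N) B →+* B) :=
    fun b => ⟨algebraMap B (MvPolynomial (Fin N) B) b, RingHom.congr_fun hφ₀alg b⟩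
  have hsurj₁ : Function.Surjective (φ₁.hom : MvPolynomial (Fin N) B →+* B) :=
    fun b => ⟨algebraMap B (MvPolynomial (Fin N) B) b, RingHom.congr_fun hφ₁alg b⟩
  obtain ⟨x₀, hx₀I, hx₀⟩ := (Ideal.mem_map_iff_of_surjective _ hsurj₀).mp
    ((htop φ₀ hr0) ▸ (Submodule.mem_top : (1 : B) ∈ ⊤))
  obtain ⟨x₁, hx₁I, hx₁⟩ := (Ideal.mem_map_iff_of_surjective _ hsurj₁).mp
    ((htop φ₁ hr1) ▸ (Submodule.mem_top : (1 : B) ∈ ⊤))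
  -- the image of `I` in `RLoc B` is the unit ideal
  have hPmem : ψa x₀ + ψa x₁ - ψa x₀ * ψa x₁ ∈ Ideal.map ψa.toRingHom I := by
    have m0 := Ideal.mem_map_of_mem ψa.toRingHom hx₀I
    have m1 := Ideal.mem_map_of_mem ψa.toRingHom hx₁I
    exact sub_mem (add_mem m0 m1) (Ideal.mul_mem_right _ _ m0)
  have hev0x₀ : ev0 B (ψa x₀) = 1 := by
    have := RingHom.congr_fun hev0ψ x₀; simp only [RingHom.comp_apply] at this
    rw [show ev0 B (ψa x₀) = (ev0 B).toRingHom (ψa.toRingHom x₀) from rfl, this, hx₀]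
  have hev1x₁ : ev1 B (ψa x₁) = 1 := by
    have := RingHom.congr_fun hev1ψ x₁; simp only [RingHom.comp_apply] at this
    rw [show ev1 B (ψa x₁) = (ev1 B).toRingHom (ψa.toRingHom x₁) from rfl, this, hx₁]
  have hPunit : IsUnit (ψa x₀ + ψa x₁ - ψa x₀ * ψa x₁) := by
    apply isUnit_of_ev_isUnit
    · rw [map_sub, map_add, map_mul, hev0x₀]; simpa using isUnit_one
    · rw [map_sub, map_add, map_mul, hev1x₁]; simpa using isUnit_one
  have hItop : Ideal.map ψa.toRingHom I = ⊤ := Ideal.eq_top_of_isUnit_mem _ hPmem hPunit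
  -- the line lands in `V`
  set ψ' : CommRingCat.of (MvPolynomial (Fin N) B) ⟶ CommRingCat.of (RLoc B) :=
    CommRingCat.ofHom ψa.toRingHom with hψ'
  have hrangeψ : Set.range (Spec.map ψ').base ⊆ Set.range V.ι.base := by
    rw [Scheme.Opens.range_ι]
    rintro _ ⟨q, rfl⟩
    by_contra hqV
    have h2 : (Spec.map ψ').base q ∈ ((V : Set (AffineSpaceB B N)))ᶜ := hqV
    replace h2 := (Set.ext_iff.mp hI _).mp h2
    replace h2 := (PrimeSpectrum.mem_zeroLocus _ _).mp h2
    have hle : Ideal.map ψa.toRingHom I ≤ q.asIdeal :=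
      Ideal.map_le_iff_le_comap.mpr (fun x hx => h2 hx)
    rw [hItop] at hle
    exact q.isPrime.ne_top (top_le_iff.mp hle)
  set f' := IsOpenImmersion.lift V.ι (Spec.map ψ') hrangeψ with hf'
  have hfac : f' ≫ V.ι = Spec.map ψ' := IsOpenImmersion.lift_fac V.ι (Spec.map ψ') hrangeψ
  refine ⟨f' ≫ r, ?_, ?_, ?_⟩
  · rw [Category.assoc, hr, ← Category.assoc, hfac, ← Spec.map_comp]
    exact congrArg Spec.map (congrArg CommRingCat.ofHom (AlgHom.comp_algebraMap ψa))
  · have key : Spec.map (CommRingCat.ofHom (ev0 B).toRingHom) ≫ f' = y₀ ≫ i := by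
      rw [← cancel_mono V.ι, Category.assoc, hfac, ← Spec.map_comp, Category.assoc, ← hφ₀]
      exact congrArg Spec.map (show ψ' ≫ CommRingCat.ofHom (ev0 B).toRingHom = φ₀ from CommRingCat.hom_ext hev0ψ)
    rw [← Category.assoc, key, Category.assoc, hri, Category.comp_id]
  · have key : Spec.map (CommRingCat.ofHom (ev1 B).toRingHom) ≫ f' = y₁ ≫ i := by
      rw [← cancel_mono V.ι, Category.assoc, hfac, ← Spec.map_comp, Category.assoc, ← hφ₁]
      exact congrArg Spec.map (show ψ' ≫ CommRingCat.ofHom (ev1 B).toRingHom = φ₁ from CommRingCat.hom_ext hev1ψ)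
    rw [← Category.assoc, key, Category.assoc, hri, Category.comp_id]


/-!
STATEMENT 17: Let `B` be a semilocal commutative ring, `V` an open subscheme of the
affine space `A^N_B`, and `U` a `B`-scheme which is a `B`-retract of `V`.  Then any two
elements of `U(B)` are R-equivalent; in particular, if `U(B)` is nonempty, `U(B)/R` is
a singleton.
-/

theorem R_equivalence_trivial_on_retracts_of_opens_of_affine_space
    (B : Type u) [CommRing B] [Finite (MaximalSpectrum B)] (N : ℕ)
    (V : (AffineSpaceB B N).Opens)
    (U : Scheme.{u}) (p : U ⟶ Spec (CommRingCat.of B))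
    -- the retraction data, over `Spec B`
    (i : U ⟶ (V : Scheme.{u})) (r : (V : Scheme.{u}) ⟶ U)
    (hi : i ≫ V.ι ≫ affineSpaceStruct B N = p)
    (hr : r ≫ p = V.ι ≫ affineSpaceStruct B N)
    (hri : i ≫ r = 𝟙 U) :
    -- any two `B`-points of `U` are R-equivalent ...
    (∀ y₀ y₁ : Spec (CommRingCat.of B) ⟶ U,
      y₀ ≫ p = 𝟙 (Spec (CommRingCat.of B)) → y₁ ≫ p = 𝟙 (Spec (CommRingCat.of B)) →
      Relation.EqvGen (SchemeDirectR B U p) y₀ y₁) ∧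
    -- ... in particular if `U(B) ≠ ∅` then `U(B)/R` is a singleton
    (Nonempty {y : Spec (CommRingCat.of B) ⟶ U // y ≫ p = 𝟙 (Spec (CommRingCat.of B))} →
      Subsingleton (Quot (fun y₀ y₁ :
          {y : Spec (CommRingCat.of B) ⟶ U // y ≫ p = 𝟙 (Spec (CommRingCat.of B))} =>
        SchemeDirectR B U p y₀.1 y₁.1))) := by
  have main : ∀ y₀ y₁ : Spec (CommRingCat.of B) ⟶ U,
      y₀ ≫ p = 𝟙 (Spec (CommRingCat.of B)) → y₁ ≫ p = 𝟙 (Spec (CommRingCat.of B)) →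
      SchemeDirectR B U p y₀ y₁ := fun y₀ y₁ h₀ h₁ =>
    schemeDirectR_of_retract B N V U p i r hi hr hri y₀ y₁ h₀ h₁
  refine ⟨fun y₀ y₁ h₀ h₁ => Relation.EqvGen.rel _ _ (main y₀ y₁ h₀ h₁), fun _ => ?_⟩
  exact ⟨fun a b => Quot.inductionOn a fun a => Quot.inductionOn b fun b =>
    Quot.sound (main a.1 b.1 a.2 b.2)⟩
end
end

section
/- Let B be a semilocal commutative ring with maximal ideals 𝔪₁,…,𝔪_c and residue fields κᵢ = B/𝔪ᵢ. Let V be an open subscheme of the affine space A^N_B, and let U be a scheme over Spec B which is a B-retract of V (there exist B-morphisms i : U → V and r : V → U with r ∘ i = id_U). Then the natural map U(B) → U(κ₁) × ⋯ × U(κ_c) is surjective. -/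
noncomputable section

open Polynomial

open AlgebraicGeometry CategoryTheory

universe u

/-!
STATEMENT 18: Let `B` be a semilocal commutative ring with maximal ideals
`𝔪₁,…,𝔪_c` and residue fields `κᵢ = B/𝔪ᵢ`.  Let `V` be an open subscheme of `A^N_B`
and `U` a `B`-scheme which is a `B`-retract of `V`.  Then the natural map
`U(B) → U(κ₁) × ⋯ × U(κ_c)` is surjective.
-/

/-- Chinese remainder: a family of residues over all maximal ideals lifts to `B`. -/
lemma crt_surj_aux (B : Type u) [CommRing B] [Finite (MaximalSpectrum B)]
    (f : ∀ 𝔪 : MaximalSpectrum B, B ⧸ 𝔪.asIdeal) :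
    ∃ b : B, ∀ 𝔪 : MaximalSpectrum B, Ideal.Quotient.mk 𝔪.asIdeal b = f 𝔪 := by
  have hco : Pairwise (Function.onFun IsCoprime fun 𝔪 : MaximalSpectrum B => 𝔪.asIdeal) := by
    intro 𝔪 𝔪' hne
    exact Ideal.isCoprime_iff_sup_eq.mpr (Ideal.IsMaximal.coprime_of_ne 𝔪.isMaximal 𝔪'.isMaximal
      (fun h => hne (MaximalSpectrum.ext h)))
  obtain ⟨c, hc⟩ := Ideal.quotientInfToPiQuotient_surj hco f
  obtain ⟨b, rfl⟩ := Ideal.Quotient.mk_surjective c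
  refine ⟨b, fun 𝔪 => ?_⟩
  have := congrFun hc 𝔪
  rwa [Ideal.quotientInfToPiQuotient_mk'] at this

theorem points_of_retract_of_open_of_affine_space_lift_residues
    (B : Type u) [CommRing B] [Finite (MaximalSpectrum B)] (N : ℕ)
    (V : (AffineSpaceB B N).Opens)
    (U : Scheme.{u}) (p : U ⟶ Spec (CommRingCat.of B))
    -- the retraction data, over `Spec B`
    (i : U ⟶ (V : Scheme.{u})) (r : (V : Scheme.{u}) ⟶ U)
    (hi : i ≫ V.ι ≫ affineSpaceStruct B N = p)
    (hr : r ≫ p = V.ι ≫ affineSpaceStruct B N)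
    (hri : i ≫ r = 𝟙 U)
    -- a family of points of `U` over the residue fields of `B`
    (z : ∀ 𝔪 : MaximalSpectrum B, Spec (CommRingCat.of (B ⧸ 𝔪.asIdeal)) ⟶ U)
    (hz : ∀ 𝔪 : MaximalSpectrum B,
      z 𝔪 ≫ p = Spec.map (CommRingCat.ofHom (Ideal.Quotient.mk 𝔪.asIdeal))) :
    -- lifts to a point of `U(B)`
    ∃ y : Spec (CommRingCat.of B) ⟶ U,
      y ≫ p = 𝟙 (Spec (CommRingCat.of B)) ∧
      ∀ 𝔪 : MaximalSpectrum B,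
        Spec.map (CommRingCat.ofHom (Ideal.Quotient.mk 𝔪.asIdeal)) ≫ y = z 𝔪 := by
  classical
  -- the residue-field points of affine space, as ring homs
  let ψ : ∀ 𝔪 : MaximalSpectrum B,
      CommRingCat.of (MvPolynomial (Fin N) B) ⟶ CommRingCat.of (B ⧸ 𝔪.asIdeal) :=
    fun 𝔪 => Spec.preimage (z 𝔪 ≫ i ≫ V.ι)
  have hψ : ∀ 𝔪, Spec.map (ψ 𝔪) = z 𝔪 ≫ i ≫ V.ι := fun 𝔪 => Spec.map_preimage _
  have hcompat : ∀ 𝔪 : MaximalSpectrum B,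
      CommRingCat.ofHom (algebraMap B (MvPolynomial (Fin N) B)) ≫ ψ 𝔪
        = CommRingCat.ofHom (Ideal.Quotient.mk 𝔪.asIdeal) := by
    intro 𝔪
    apply Spec.map_injective
    rw [Spec.map_comp, hψ, ← hz 𝔪, ← hi]
    simp [Category.assoc, affineSpaceStruct]
  -- lift the coordinates using CRT
  have hbe : ∀ j : Fin N, ∃ b : B, ∀ 𝔪 : MaximalSpectrum B,
      Ideal.Quotient.mk 𝔪.asIdeal b = ψ 𝔪 (MvPolynomial.X j) :=
    fun j => crt_surj_aux B _
  choose b hb using hbe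
  let xalg : MvPolynomial (Fin N) B →+* B := (MvPolynomial.aeval b).toRingHom
  let X : Spec (CommRingCat.of B) ⟶ AffineSpaceB B N :=
    Spec.map (CommRingCat.ofHom xalg)
  have hXψ : ∀ 𝔪 : MaximalSpectrum B,
      CommRingCat.ofHom xalg ≫ CommRingCat.ofHom (Ideal.Quotient.mk 𝔪.asIdeal) = ψ 𝔪 := by
    intro 𝔪
    apply CommRingCat.hom_ext
    apply MvPolynomial.ringHom_ext
    · intro c
      have h1 := ConcreteCategory.congr_hom (hcompat 𝔪) c
      simpa [xalg, MvPolynomial.algebraMap_eq] using h1.symm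
    · intro j
      simpa [xalg] using hb j 𝔪
  have hkey : ∀ 𝔪 : MaximalSpectrum B,
      Spec.map (CommRingCat.ofHom (Ideal.Quotient.mk 𝔪.asIdeal)) ≫ X = z 𝔪 ≫ i ≫ V.ι := by
    intro 𝔪
    rw [← hψ 𝔪, ← hXψ 𝔪, Spec.map_comp]
  -- the section of affine space lands in V
  have hrange : Set.range X.base ⊆ Set.range V.ι.base := by
    rw [Scheme.Opens.range_ι]
    rintro _ ⟨q, rfl⟩
    obtain ⟨M, hM, hqM⟩ := q.asIdeal.exists_le_maximal q.2.ne_top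
    haveI := hM
    haveI : Nontrivial (B ⧸ M) := Ideal.Quotient.nontrivial_iff.mpr hM.ne_top
    set 𝔪 : MaximalSpectrum B := ⟨M, hM⟩
    obtain ⟨ζ⟩ : Nonempty (Spec (CommRingCat.of (B ⧸ M))) :=
      inferInstanceAs (Nonempty (PrimeSpectrum (B ⧸ M)))
    have hmζ : (Spec.map (CommRingCat.ofHom (Ideal.Quotient.mk M))).base ζ
        = (⟨M, hM.isPrime⟩ : PrimeSpectrum B) := by
      apply PrimeSpectrum.ext
      show Ideal.comap (Ideal.Quotient.mk M) (PrimeSpectrum.asIdeal ζ) = M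
      have hle : M ≤ Ideal.comap (Ideal.Quotient.mk M) (PrimeSpectrum.asIdeal ζ) := by
        intro x hx
        have : Ideal.Quotient.mk M x ∈ PrimeSpectrum.asIdeal ζ := by
          rw [Ideal.Quotient.eq_zero_iff_mem.mpr hx]
          exact Ideal.zero_mem _
        exact this
      have hpr : (Ideal.comap (Ideal.Quotient.mk M) (PrimeSpectrum.asIdeal ζ)).IsPrime :=
        Ideal.IsPrime.comap _ (hK := (PrimeSpectrum.isPrime ζ))
      exact (hM.eq_of_le hpr.ne_top hle).symm
    have hmem : X.base (⟨M, hM.isPrime⟩ : PrimeSpectrum B) ∈ (V : Set _) := by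
      have h2 : X.base ((Spec.map (CommRingCat.ofHom (Ideal.Quotient.mk M))).base ζ)
          = V.ι.base ((z 𝔪 ≫ i).base ζ) := by
        have h3 := congrArg (fun (f : Spec (CommRingCat.of (B ⧸ M)) ⟶ AffineSpaceB B N)
          => f.base ζ) (hkey 𝔪)
        simpa using h3
      rw [hmζ] at h2
      rw [h2, ← Scheme.Opens.range_ι]
      exact Set.mem_range_self _
    have hspec : X.base q ⤳ X.base (⟨M, hM.isPrime⟩ : PrimeSpectrum B) := by
      refine Specializes.map ?_ X.base.hom.continuous
      exact (PrimeSpectrum.le_iff_specializes _ _).mp hqM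
    by_contra hq
    exact (hspec.mem_closed (V.isOpen.isClosed_compl) hq) hmem
  -- lift through the open immersion and retract
  let x' : Spec (CommRingCat.of B) ⟶ (V : Scheme.{u}) := IsOpenImmersion.lift V.ι X hrange
  have hx' : x' ≫ V.ι = X := IsOpenImmersion.lift_fac _ _ hrange
  refine ⟨x' ≫ r, ?_, ?_⟩
  · rw [Category.assoc, hr, ← Category.assoc, hx']
    show Spec.map (CommRingCat.ofHom xalg) ≫ Spec.map _ = _
    rw [← Spec.map_comp]
    have : CommRingCat.ofHom (algebraMap B (MvPolynomial (Fin N) B))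
        ≫ CommRingCat.ofHom xalg = 𝟙 (CommRingCat.of B) := by
      apply CommRingCat.hom_ext
      apply RingHom.ext
      intro c
      simp [xalg, CommRingCat.comp_apply]
    rw [this, Spec.map_id]
  · intro 𝔪
    have h4 : (Spec.map (CommRingCat.ofHom (Ideal.Quotient.mk 𝔪.asIdeal)) ≫ x') ≫ V.ι
        = (z 𝔪 ≫ i) ≫ V.ι := by
      rw [Category.assoc, hx', hkey 𝔪, Category.assoc]
    have h5 := (cancel_mono V.ι).mp h4
    rw [← Category.assoc, h5, Category.assoc, hri, Category.comp_id]
end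
end
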